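/- arXiv:1808.09017 — 4 statements merged into one kernel-verified Lean document; each statement's English description precedes it below -/
import Mathlib

section
/- For any constant β > 1, the infimum of ∫₀^∞ (1 - f(t))² t^{-β} dt over all nonnegative functions f : (0,∞) → [0,∞) with ∫₀^∞ f(t)² dt = 1 equals ((β-1)^{β-1}/β^β)·(π/β / sin(π/β))^β. -/
open MeasureTheory Set Real Filter Topology ENNReal

lemma beta_real {s : ℝ} (h0 : 0 < s) (h1 : s < 1) :
    ∫ x in (0:ℝ)..1, x ^ (s-1) * (1-x) ^ (-s) = π / Real.sin (π * s) := by
  have h2 : (0:ℝ) < 1 - s := by linarith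
  have hb : Complex.betaIntegral s (1-s) = ((π / Real.sin (π * s) : ℝ) : ℂ) := by
    have h := Complex.Gamma_mul_Gamma_eq_betaIntegral
      (s := (s:ℂ)) (t := ((1-s : ℝ) :ℂ)) (by simpa using h0) (by simpa using h2)
    push_cast at h
    rw [add_sub_cancel, Complex.Gamma_one, one_mul] at h
    rw [← h, show ((1:ℂ) - ↑s) = (((1-s:ℝ)):ℂ) by push_cast; ring,
      Complex.Gamma_ofReal, Complex.Gamma_ofReal, ← Complex.ofReal_mul,
      Real.Gamma_mul_Gamma_one_sub]
  have heq : ∀ x ∈ Set.uIcc (0:ℝ) 1,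
      ((x:ℂ)) ^ ((s:ℂ) - 1) * ((1:ℂ) - x) ^ ((1:ℂ) - (s:ℂ) - 1)
        = ((x ^ (s-1) * (1-x) ^ (-s) : ℝ) : ℂ) := by
    intro x hx
    rw [Set.uIcc_of_le (by norm_num : (0:ℝ) ≤ 1)] at hx
    have hx0 : (0:ℝ) ≤ x := hx.1
    have hx1 : (0:ℝ) ≤ 1 - x := by linarith [hx.2]
    rw [Complex.ofReal_mul, Complex.ofReal_cpow hx0, Complex.ofReal_cpow hx1]
    push_cast
    ring_nf
  have hbi : Complex.betaIntegral s (1-s)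
      = ((∫ x in (0:ℝ)..1, x ^ (s-1) * (1-x) ^ (-s) : ℝ) : ℂ) := by
    rw [Complex.betaIntegral]
    rw [intervalIntegral.integral_congr heq, intervalIntegral.integral_ofReal]
  rw [hbi] at hb
  exact_mod_cast hb

lemma mellin_val {s : ℝ} (h0 : 0 < s) (h1 : s < 1) :
    ∫ u in Ioi (0:ℝ), u ^ (s-1) / (1+u) = π / Real.sin (π * s) := by
  set φ : ℝ → ℝ := fun u => u / (1+u) with hφ
  have himg : φ '' Ioi 0 = Ioo 0 1 := by
    ext y
    constructor
    · rintro ⟨u, hu, rfl⟩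
      have hu : (0:ℝ) < u := hu
      have h1u : (0:ℝ) < 1 + u := by linarith
      constructor
      · positivity
      · rw [div_lt_one h1u]; linarith
    · rintro ⟨hy0, hy1⟩
      have h1y : (0:ℝ) < 1 - y := by linarith
      refine ⟨y / (1-y), by simp only [mem_Ioi]; positivity, ?_⟩
      simp only [hφ]
      have : 1 + y/(1-y) = 1/(1-y) := by field_simp; ring
      rw [this]
      field_simp
  have hder : ∀ u ∈ Ioi (0:ℝ), HasDerivWithinAt φ (((1+u)^2)⁻¹) (Ioi 0) u := by
    intro u hu
    have hu : (0:ℝ) < u := hu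
    have h1u : (1:ℝ) + u ≠ 0 := by linarith
    have h : HasDerivAt φ ((1*(1+u) - u*(0+1))/(1+u)^2) u :=
      (hasDerivAt_id u).div ((hasDerivAt_const u 1).add (hasDerivAt_id u)) h1u
    have h2 : (1*(1+u) - u*(0+1))/(1+u)^2 = ((1+u)^2)⁻¹ := by
      field_simp
      ring
    rw [h2] at h
    exact h.hasDerivWithinAt
  have hinj : InjOn φ (Ioi 0) := by
    intro a ha b hb hab
    have ha : (0:ℝ) < a := ha
    have hb : (0:ℝ) < b := hb
    simp only [hφ] at hab
    field_simp [show (1:ℝ)+a ≠ 0 by linarith, show (1:ℝ)+b ≠ 0 by linarith] at hab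
    linarith
  have hcv := integral_image_eq_integral_abs_deriv_smul measurableSet_Ioi hder hinj
    (fun x => x ^ (s-1) * (1-x) ^ (-s))
  rw [himg] at hcv
  have hleft : ∫ x in Ioo (0:ℝ) 1, x ^ (s-1) * (1-x) ^ (-s) = π / Real.sin (π * s) := by
    rw [← MeasureTheory.integral_Ioc_eq_integral_Ioo,
      ← intervalIntegral.integral_of_le (by norm_num : (0:ℝ) ≤ 1)]
    exact beta_real h0 h1
  rw [hleft] at hcv
  rw [hcv]
  apply setIntegral_congr_fun measurableSet_Ioi
  intro u hu
  have hu : (0:ℝ) < u := hu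
  have h1u : (0:ℝ) < 1 + u := by linarith
  show u ^ (s-1) / (1+u) = |((1+u)^2)⁻¹| • ((u/(1+u)) ^ (s-1) * (1 - u/(1+u)) ^ (-s))
  have e2 : (1:ℝ) - u/(1+u) = (1+u)⁻¹ := by field_simp; ring
  have hs : (1+u) ^ s ≠ 0 := by positivity
  rw [smul_eq_mul, e2, div_rpow hu.le h1u.le, abs_of_nonneg (by positivity),
    Real.inv_rpow h1u.le, Real.rpow_neg h1u.le, inv_inv,
    Real.rpow_sub h1u, Real.rpow_one]
  field_simp

lemma g1_cont {β : ℝ} (hβ : 1 < β) :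
    ContinuousOn (fun t : ℝ => (1 + t ^ β)⁻¹) (Ioi 0) := by
  intro t ht
  have ht : (0:ℝ) < t := ht
  have h1 : ContinuousAt (fun t : ℝ => (1 + t ^ β)⁻¹) t := by
    have hrp : ContinuousAt (fun t : ℝ => t ^ β) t :=
      Real.continuousAt_rpow_const t β (Or.inl ht.ne')
    exact ((continuousAt_const.add hrp).inv₀ (show (1:ℝ) + t ^ β ≠ 0 by positivity))
  exact h1.continuousWithinAt

lemma g1_int {β : ℝ} (hβ : 1 < β) :
    IntegrableOn (fun t : ℝ => (1 + t ^ β)⁻¹) (Ioi 0) := by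
  have hβ0 : (0:ℝ) < β := by linarith
  have hmeas : AEStronglyMeasurable (fun t : ℝ => (1 + t ^ β)⁻¹)
      (volume.restrict (Ioi (0:ℝ))) :=
    (g1_cont hβ).aestronglyMeasurable measurableSet_Ioi
  have hsplit : Ioi (0:ℝ) = Ioc 0 1 ∪ Ioi 1 := by
    rw [Ioc_union_Ioi_eq_Ioi]; norm_num
  rw [hsplit]
  apply IntegrableOn.union
  · -- bounded by 1 on Ioc 0 1
    apply Integrable.mono ((integrableOn_const_iff (C := (1:ℝ))).2 (Or.inr (by simp [measure_Ioc_lt_top])))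
      (hmeas.mono_measure (Measure.restrict_mono (by rw [hsplit]; exact subset_union_left) le_rfl))
    filter_upwards [ae_restrict_mem measurableSet_Ioc] with t ht
    have ht0 : (0:ℝ) < t := ht.1
    have : (0:ℝ) < t ^ β := rpow_pos_of_pos ht0 β
    rw [Real.norm_eq_abs, Real.norm_eq_abs, abs_of_nonneg (by positivity), abs_of_nonneg one_pos.le]
    rw [inv_le_one_iff₀]
    right; linarith
  · -- bounded by t^(-β) on Ioi 1
    apply Integrable.mono (integrableOn_Ioi_rpow_of_lt (by linarith : -β < -1) one_pos)
      (hmeas.mono_measure (Measure.restrict_mono (by rw [hsplit]; exact subset_union_right) le_rfl))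
    filter_upwards [ae_restrict_mem measurableSet_Ioi] with t ht
    have ht1 : (1:ℝ) < t := ht
    have ht0 : (0:ℝ) < t := by linarith
    have htb : (0:ℝ) < t ^ β := rpow_pos_of_pos ht0 β
    rw [Real.norm_eq_abs, Real.norm_eq_abs, abs_of_nonneg (by positivity),
      abs_of_nonneg (rpow_nonneg ht0.le _), Real.rpow_neg ht0.le]
    apply inv_anti₀ htb
    linarith
lemma g1_val {β : ℝ} (hβ : 1 < β) :
    ∫ t in Ioi (0:ℝ), (1 + t ^ β)⁻¹ = (π / Real.sin (π / β)) / β := by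
  have hβ0 : (0:ℝ) < β := by linarith
  have hs0 : 0 < 1/β := by positivity
  have hs1 : 1/β < 1 := by rw [div_lt_one hβ0]; linarith
  have key := integral_comp_rpow_Ioi_of_pos
    (g := fun y : ℝ => (1/β) * (y ^ (1/β - 1) / (1+y))) (p := β) hβ0
  have congr1 : ∀ x ∈ Ioi (0:ℝ),
      (β * x ^ (β - 1)) • ((1/β) * ((x ^ β) ^ (1/β - 1) / (1 + x ^ β)))
        = (1 + x ^ β)⁻¹ := by
    intro x hx
    have hx : (0:ℝ) < x := hx
    have hxb : (0:ℝ) < x ^ β := rpow_pos_of_pos hx β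
    have e2 : x ^ (β-1) * x ^ (1-β) = 1 := by
      rw [← Real.rpow_add hx]; norm_num
    rw [smul_eq_mul, ← Real.rpow_mul hx.le]
    have e : β * (1/β - 1) = 1 - β := by field_simp
    rw [e]
    calc β * x ^ (β - 1) * (1 / β * (x ^ (1-β) / (1 + x ^ β)))
        = (x ^ (β-1) * x ^ (1-β)) * ((β * (1/β)) / (1+x^β)) := by ring
      _ = (1+x^β)⁻¹ := by
          rw [e2]; field_simp
  calc ∫ t in Ioi (0:ℝ), (1+t^β)⁻¹
      = ∫ x in Ioi (0:ℝ), (β * x ^ (β-1)) • ((1/β) * ((x^β) ^ (1/β-1) / (1+x^β))) :=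
        (setIntegral_congr_fun measurableSet_Ioi congr1).symm
    _ = ∫ y in Ioi (0:ℝ), (1/β) * (y ^ (1/β-1) / (1+y)) := key
    _ = (1/β) * ∫ y in Ioi (0:ℝ), y ^ (1/β-1) / (1+y) := by
        rw [integral_const_mul]
    _ = (π / Real.sin (π / β)) / β := by
        rw [mellin_val hs0 hs1]
        rw [show π * (1/β) = π/β by ring]
        ring

lemma g2_int {β : ℝ} (hβ : 1 < β) :
    IntegrableOn (fun t : ℝ => ((1 + t ^ β)⁻¹)^2) (Ioi 0) := by
  apply Integrable.mono (g1_int hβ)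
    (((g1_cont hβ).pow 2).aestronglyMeasurable measurableSet_Ioi)
  filter_upwards [ae_restrict_mem measurableSet_Ioi] with t ht
  have ht : (0:ℝ) < t := ht
  have htb : (0:ℝ) < 1 + t ^ β := by positivity
  show ‖((1 + t ^ β)⁻¹)^2‖ ≤ ‖(1 + t ^ β)⁻¹‖
  rw [Real.norm_eq_abs, Real.norm_eq_abs, abs_of_nonneg (by positivity),
    abs_of_nonneg (by positivity)]
  rw [pow_two]
  nlinarith [inv_pos.2 htb, inv_le_one_of_one_le₀ (by nlinarith [Real.rpow_pos_of_pos ht β] : (1:ℝ) ≤ 1 + t ^ β)]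

lemma g3_int {β : ℝ} (hβ : 1 < β) :
    IntegrableOn (fun t : ℝ => t ^ β * ((1 + t ^ β)⁻¹)^2) (Ioi 0) := by
  have hcont : ContinuousOn (fun t : ℝ => t ^ β * ((1 + t ^ β)⁻¹)^2) (Ioi 0) := by
    apply ContinuousOn.mul _ ((g1_cont hβ).pow 2)
    intro t ht
    exact (Real.continuousAt_rpow_const t β (Or.inl (ne_of_gt ht))).continuousWithinAt
  apply Integrable.mono (g1_int hβ) (hcont.aestronglyMeasurable measurableSet_Ioi)
  filter_upwards [ae_restrict_mem measurableSet_Ioi] with t ht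
  have ht : (0:ℝ) < t := ht
  have htp : (0:ℝ) < t ^ β := Real.rpow_pos_of_pos ht β
  have htb : (0:ℝ) < 1 + t ^ β := by positivity
  rw [Real.norm_eq_abs, Real.norm_eq_abs, abs_of_nonneg (by positivity),
    abs_of_nonneg (by positivity), pow_two]
  have h1 : t ^ β * ((1+t^β)⁻¹ * (1+t^β)⁻¹) * (1+t^β) = t^β * (1+t^β)⁻¹ := by
    field_simp
  have h2 : (1+t^β)*(1+t^β)⁻¹ = 1 := mul_inv_cancel₀ htb.ne'
  nlinarith [mul_pos (mul_pos htp (mul_pos (inv_pos.2 htb) (inv_pos.2 htb))) htb,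
    inv_pos.2 htb, h1, h2]

lemma ibp_zero {β : ℝ} (hβ : 1 < β) :
    ∫ t in Ioi (0:ℝ), (((1 + t ^ β)⁻¹)^2 - (β-1) * (t ^ β * ((1 + t ^ β)⁻¹)^2)) = 0 := by
  have hβ0 : (0:ℝ) < β := by linarith
  set φ : ℝ → ℝ := fun t => t * (1 + t ^ β)⁻¹ with hφ
  have hcont : ContinuousWithinAt φ (Ici 0) 0 := by
    apply ContinuousAt.continuousWithinAt
    have h1 : ContinuousAt (fun t : ℝ => t ^ β) 0 :=
      Real.continuousAt_rpow_const 0 β (Or.inr hβ0.le)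
    have h2 : (fun t : ℝ => 1 + t ^ β) 0 ≠ 0 := by
      simp [Real.zero_rpow hβ0.ne']
    exact continuousAt_id.mul ((continuousAt_const.add h1).inv₀ h2)
  have hderiv : ∀ t ∈ Ioi (0:ℝ), HasDerivAt φ
      (((1 + t ^ β)⁻¹)^2 - (β-1) * (t ^ β * ((1 + t ^ β)⁻¹)^2)) t := by
    intro t ht
    have ht : (0:ℝ) < t := ht
    have htp : (0:ℝ) < t ^ β := Real.rpow_pos_of_pos ht β
    have htb : (0:ℝ) < 1 + t ^ β := by positivity
    have hin : HasDerivAt (fun t : ℝ => 1 + t ^ β) (0 + β * t ^ (β-1)) t :=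
      (hasDerivAt_const t 1).add (Real.hasDerivAt_rpow_const (Or.inl ht.ne'))
    have hinv := hin.inv htb.ne'
    have h : HasDerivAt (fun t : ℝ => t * (1 + t ^ β)⁻¹)
        (1 * (1 + t ^ β)⁻¹ + t * (-(0 + β * t ^ (β - 1)) / (1 + t ^ β) ^ 2)) t :=
      (hasDerivAt_id t).mul hinv
    convert h using 1
    have e1 : t * t ^ (β-1) = t ^ β := by
      nth_rewrite 1 [← Real.rpow_one t]
      rw [← Real.rpow_add ht]; ring_nf
    simp only [id_eq, one_mul]
    field_simp
    linear_combination β * e1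
  have hint : IntegrableOn
      (fun t : ℝ => ((1 + t ^ β)⁻¹)^2 - (β-1) * (t ^ β * ((1 + t ^ β)⁻¹)^2)) (Ioi 0) :=
    (g2_int hβ).sub ((g3_int hβ).const_mul (β-1))
  have htend : Tendsto φ atTop (𝓝 0) := by
    have hev : (fun t : ℝ => t ^ (1-β) / (t ^ (-β) + 1)) =ᶠ[atTop] φ := by
      filter_upwards [eventually_gt_atTop (0:ℝ)] with t ht
      have htp : (0:ℝ) < t ^ β := Real.rpow_pos_of_pos ht β
      have e1 : t ^ (1-β) = t * (t ^ β)⁻¹ := by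
        rw [show (1:ℝ)-β = 1 + -β by ring, Real.rpow_add ht, Real.rpow_one,
          Real.rpow_neg ht.le]
      have e2 : t ^ (-β) = (t ^ β)⁻¹ := Real.rpow_neg ht.le β
      rw [hφ, e1, e2]
      field_simp
    rw [← Filter.tendsto_congr' hev]
    have hnum : Tendsto (fun t : ℝ => t ^ (1-β)) atTop (𝓝 0) := by
      have := tendsto_rpow_neg_atTop (by linarith : (0:ℝ) < β - 1)
      simpa [show -(β-1) = 1-β by ring] using this
    have hden : Tendsto (fun t : ℝ => t ^ (-β) + 1) atTop (𝓝 1) := by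
      simpa using (tendsto_rpow_neg_atTop hβ0).add tendsto_const_nhds
    have h := hnum.div hden one_ne_zero
    rw [div_one] at h
    exact h
  have := integral_Ioi_of_hasDerivAt_of_tendsto hcont hderiv hint htend
  rw [this, hφ]
  simp [Real.zero_rpow hβ0.ne']

lemma g3_val {β : ℝ} (hβ : 1 < β) :
    ∫ t in Ioi (0:ℝ), t ^ β * ((1 + t ^ β)⁻¹)^2 = (π / Real.sin (π / β)) / β^2 := by
  have hβ0 : (0:ℝ) < β := by linarith
  set K := π / Real.sin (π / β) with hK
  set I2 := ∫ t in Ioi (0:ℝ), ((1 + t ^ β)⁻¹)^2 with hI2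
  set I3 := ∫ t in Ioi (0:ℝ), t ^ β * ((1 + t ^ β)⁻¹)^2 with hI3
  have h1 : I2 - (β-1) * I3 = 0 := by
    rw [hI2, hI3, ← integral_const_mul, ← integral_sub (g2_int hβ) ((g3_int hβ).const_mul (β-1))]
    exact ibp_zero hβ
  have h2 : I2 + I3 = K / β := by
    rw [hI2, hI3, ← integral_add (g2_int hβ) (g3_int hβ)]
    rw [← g1_val hβ]
    apply setIntegral_congr_fun measurableSet_Ioi
    intro t ht
    have ht : (0:ℝ) < t := ht
    have htb : (0:ℝ) < 1 + t ^ β := by positivity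
    field_simp
  have h3 : β * I3 = K / β := by linear_combination h2 - h1
  have h4 : I3 = (K/β)/β := by rwa [mul_comm, ← eq_div_iff hβ0.ne'] at h3
  rw [h4]; ring

lemma g2_val {β : ℝ} (hβ : 1 < β) :
    ∫ t in Ioi (0:ℝ), ((1 + t ^ β)⁻¹)^2 = (β-1) * (π / Real.sin (π / β)) / β^2 := by
  have h1 : (∫ t in Ioi (0:ℝ), ((1 + t ^ β)⁻¹)^2)
      - (β-1) * ∫ t in Ioi (0:ℝ), t ^ β * ((1 + t ^ β)⁻¹)^2 = 0 := by
    rw [← integral_const_mul, ← integral_sub (g2_int hβ) ((g3_int hβ).const_mul (β-1))]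
    exact ibp_zero hβ
  rw [g3_val hβ] at h1
  linear_combination h1

theorem stmt_0 (β : ℝ) (hβ : 1 < β) :
    sInf {I : ℝ≥0∞ | ∃ f : ℝ → ℝ, Measurable f ∧ (∀ t ∈ Ioi (0:ℝ), 0 ≤ f t) ∧
        (∫⁻ t in Ioi (0:ℝ), ENNReal.ofReal ((f t)^2)) = 1 ∧
        I = ∫⁻ t in Ioi (0:ℝ), ENNReal.ofReal ((1 - f t)^2 * t ^ (-β))} =
      ENNReal.ofReal ((β-1) ^ (β-1) / β ^ β * ((π/β) / Real.sin (π/β)) ^ β) := by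
  have hβ0 : (0:ℝ) < β := by linarith
  have hπβ : 0 < π/β := by positivity
  have hsin : 0 < Real.sin (π/β) :=
    Real.sin_pos_of_pos_of_lt_pi hπβ (div_lt_self Real.pi_pos hβ)
  set K : ℝ := π / Real.sin (π/β) with hKdef
  have hK : 0 < K := by positivity
  set A : ℝ := (β-1) * K / β^2 with hAdef
  have hA : 0 < A := div_pos (mul_pos (by linarith) hK) (by positivity)
  have hβ1 : (0:ℝ) < β - 1 := by linarith
  have hKβ2 : (0:ℝ) < K / β^2 := by positivity
  -- target value identity
  have hT : (β-1) ^ (β-1) / β ^ β * ((π/β) / Real.sin (π/β)) ^ β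
      = A ^ (β-1) * (K/β^2) := by
    have e0 : (π/β) / Real.sin (π/β) = K/β := by rw [hKdef]; ring
    have h1 : A ^ (β-1) = (β-1) ^ (β-1) * (K/β^2) ^ (β-1) := by
      rw [hAdef, mul_div_assoc, Real.mul_rpow hβ1.le hKβ2.le]
    have h2 : (K/β^2) ^ (β-1) * (K/β^2) = (K/β^2) ^ β := by
      rw [← Real.rpow_add_one hKβ2.ne' (β-1)]
      norm_num
    have h3 : (K/β^2) ^ β = (K/β) ^ β / β ^ β := by
      rw [show K/β^2 = (K/β)/β by ring, Real.div_rpow (by positivity) hβ0.le]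
    rw [e0, h1, mul_assoc, h2, h3]; ring
  -- scaled integrability
  have hg1A_int : IntegrableOn (fun t : ℝ => (1+(A*t)^β)⁻¹) (Ioi 0) := by
    have h := (integrableOn_Ioi_comp_mul_left_iff (fun t : ℝ => (1+t^β)⁻¹) 0 hA).2
    rw [mul_zero] at h
    exact h (g1_int hβ)
  have hg2A_int : IntegrableOn (fun t : ℝ => ((1+(A*t)^β)⁻¹)^2) (Ioi 0) := by
    have h := (integrableOn_Ioi_comp_mul_left_iff (fun t : ℝ => ((1+t^β)⁻¹)^2) 0 hA).2
    rw [mul_zero] at h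
    exact h (g2_int hβ)
  have hg3A_int : IntegrableOn (fun t : ℝ => (A*t)^β * ((1+(A*t)^β)⁻¹)^2) (Ioi 0) := by
    have h := (integrableOn_Ioi_comp_mul_left_iff (fun t : ℝ => t^β * ((1+t^β)⁻¹)^2) 0 hA).2
    rw [mul_zero] at h
    exact h (g3_int hβ)
  -- scaled values
  have hg1A_val : ∫ t in Ioi (0:ℝ), (1+(A*t)^β)⁻¹ = A⁻¹ * (K/β) := by
    rw [integral_comp_mul_left_Ioi (fun t : ℝ => (1+t^β)⁻¹) 0 hA, mul_zero, g1_val hβ,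
      smul_eq_mul, ← hKdef]
  have hg2A_val : ∫ t in Ioi (0:ℝ), ((1+(A*t)^β)⁻¹)^2 = 1 := by
    rw [integral_comp_mul_left_Ioi (fun t : ℝ => ((1+t^β)⁻¹)^2) 0 hA, mul_zero, g2_val hβ,
      smul_eq_mul, ← hKdef, ← hAdef]
    exact inv_mul_cancel₀ hA.ne'
  have hg3A_val : ∫ t in Ioi (0:ℝ), (A*t)^β * ((1+(A*t)^β)⁻¹)^2 = A⁻¹ * (K/β^2) := by
    rw [integral_comp_mul_left_Ioi (fun t : ℝ => t^β * ((1+t^β)⁻¹)^2) 0 hA, mul_zero,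
      g3_val hβ, smul_eq_mul, ← hKdef]
  have hlam : 0 < A ^ β := Real.rpow_pos_of_pos hA β
  apply le_antisymm
  · -- sInf ≤ value : membership
    rw [hT]
    apply sInf_le
    refine ⟨fun t => (1+(A*t)^β)⁻¹, ?_, ?_, ?_, ?_⟩
    · have h : Measurable fun t : ℝ => (A*t) ^ β := by fun_prop
      exact (measurable_const.add h).inv
    · intro t ht
      have ht : (0:ℝ) < t := ht
      have h := Real.rpow_pos_of_pos (mul_pos hA ht) β
      positivity
    · rw [← ofReal_integral_eq_lintegral_ofReal hg2A_int.integrable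
        (Filter.Eventually.of_forall fun t => sq_nonneg _), hg2A_val, ENNReal.ofReal_one]
    · have hcongr : ∀ t ∈ Ioi (0:ℝ),
          ENNReal.ofReal ((1 - (1+(A*t)^β)⁻¹)^2 * t ^ (-β))
            = ENNReal.ofReal (A^β * ((A*t)^β * ((1+(A*t)^β)⁻¹)^2)) := by
        intro t ht
        have ht : (0:ℝ) < t := ht
        have hu : (0:ℝ) < t^β := Real.rpow_pos_of_pos ht β
        congr 1
        have e1 : (A*t)^β = A^β * t^β := Real.mul_rpow hA.le ht.le
        have e2 : t^(-β) = (t^β)⁻¹ := Real.rpow_neg ht.le β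
        rw [e1, e2]
        have h3 : (0:ℝ) < 1 + A^β * t^β := by positivity
        field_simp
        ring
      rw [setLIntegral_congr_fun measurableSet_Ioi hcongr]
      rw [← ofReal_integral_eq_lintegral_ofReal (hg3A_int.integrable.const_mul (A^β)) ?nn]
      case nn =>
        filter_upwards [ae_restrict_mem measurableSet_Ioi] with t ht
        have ht : (0:ℝ) < t := ht
        have h := Real.rpow_pos_of_pos (mul_pos hA ht) β
        positivity
      rw [integral_const_mul, hg3A_val,
        show A^β * (A⁻¹*(K/β^2)) = A^(β-1)*(K/β^2) from by
          rw [Real.rpow_sub_one hA.ne']; ring]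
  · -- value ≤ sInf
    apply le_sInf
    rintro I ⟨f, hmf, hnn, hcon, rfl⟩
    rw [hT]
    have meas1 : Measurable fun t : ℝ => ENNReal.ofReal ((1 - f t)^2 * t ^ (-β)) := by
      have h : Measurable fun t : ℝ => t ^ (-β) := by fun_prop
      exact (((measurable_const.sub hmf).pow_const 2).mul h).ennreal_ofReal
    have meas2 : Measurable fun t : ℝ => ENNReal.ofReal ((f t)^2) :=
      (hmf.pow_const 2).ennreal_ofReal
    have hptwise : ∀ t ∈ Ioi (0:ℝ),
        ENNReal.ofReal (A^β * (1+(A*t)^β)⁻¹)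
          ≤ ENNReal.ofReal ((1 - f t)^2 * t ^ (-β)) + ENNReal.ofReal (A^β * (f t)^2) := by
      intro t ht
      have ht : (0:ℝ) < t := ht
      have hu : (0:ℝ) < t^β := Real.rpow_pos_of_pos ht β
      have h1 : 0 ≤ (1 - f t)^2 * t ^ (-β) :=
        mul_nonneg (sq_nonneg _) (Real.rpow_nonneg ht.le _)
      have h2 : 0 ≤ A^β * (f t)^2 := mul_nonneg hlam.le (sq_nonneg _)
      rw [← ENNReal.ofReal_add h1 h2]
      apply ENNReal.ofReal_le_ofReal
      have e1 : (A*t)^β = A^β * t^β := Real.mul_rpow hA.le ht.le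
      have e2 : t^(-β) = (t^β)⁻¹ := Real.rpow_neg ht.le β
      rw [e1, e2]
      have h3 : (0:ℝ) < 1 + A^β * t^β := by positivity
      have key : ((1 - f t)^2*(t^β)⁻¹ + A^β*(f t)^2) - A^β*(1+A^β*t^β)⁻¹
          = ((1 - f t) - A^β*t^β*(f t))^2 / (t^β*(1+A^β*t^β)) := by
        field_simp
        ring
      have hnonneg : 0 ≤ ((1 - f t) - A^β*t^β*(f t))^2 / (t^β*(1+A^β*t^β)) :=
        div_nonneg (sq_nonneg _) (by positivity)
      linarith [key]
    have hchain : ∫⁻ t in Ioi (0:ℝ), ENNReal.ofReal (A^β * (1+(A*t)^β)⁻¹)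
        ≤ (∫⁻ t in Ioi (0:ℝ), ENNReal.ofReal ((1 - f t)^2 * t ^ (-β)))
            + ENNReal.ofReal (A^β) := by
      calc ∫⁻ t in Ioi (0:ℝ), ENNReal.ofReal (A^β * (1+(A*t)^β)⁻¹)
          ≤ ∫⁻ t in Ioi (0:ℝ), (ENNReal.ofReal ((1 - f t)^2 * t ^ (-β))
              + ENNReal.ofReal (A^β * (f t)^2)) := by
            apply lintegral_mono_ae
            filter_upwards [ae_restrict_mem measurableSet_Ioi] with t ht
            exact hptwise t ht
        _ = (∫⁻ t in Ioi (0:ℝ), ENNReal.ofReal ((1 - f t)^2 * t ^ (-β)))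
              + ∫⁻ t in Ioi (0:ℝ), ENNReal.ofReal (A^β * (f t)^2) :=
            lintegral_add_left meas1 _
        _ = (∫⁻ t in Ioi (0:ℝ), ENNReal.ofReal ((1 - f t)^2 * t ^ (-β)))
              + ENNReal.ofReal (A^β) := by
            congr 1
            simp_rw [fun t => ENNReal.ofReal_mul (p := A^β) (q := (f t)^2) hlam.le]
            rw [lintegral_const_mul _ meas2, hcon, mul_one]
    have hlhs : ∫⁻ t in Ioi (0:ℝ), ENNReal.ofReal (A^β * (1+(A*t)^β)⁻¹)
        = ENNReal.ofReal (A^(β-1) * (K/β)) := by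
      rw [← ofReal_integral_eq_lintegral_ofReal (hg1A_int.integrable.const_mul (A^β)) ?nn2]
      case nn2 =>
        filter_upwards [ae_restrict_mem measurableSet_Ioi] with t ht
        have ht : (0:ℝ) < t := ht
        have h := Real.rpow_pos_of_pos (mul_pos hA ht) β
        positivity
      rw [integral_const_mul, hg1A_val,
        show A^β * (A⁻¹*(K/β)) = A^(β-1)*(K/β) from by
          rw [Real.rpow_sub_one hA.ne']; ring]
    have hsub : A^(β-1)*(K/β^2) = A^(β-1)*(K/β) - A^β := by
      have hAβ : A^β = A^(β-1) * A := by
        rw [Real.rpow_sub_one hA.ne']; field_simp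
      have e' : K/β^2 = K/β - A := by
        rw [hAdef]; field_simp; ring
      rw [hAβ]
      linear_combination (A:ℝ)^(β-1) * e'
    rw [hsub, ENNReal.ofReal_sub _ hlam.le, tsub_le_iff_right, ← hlhs]
    exact hchain
end

section
/- For any constant β > 1, the function f*(t) = 1/(1 + μ t^β) with μ = ((β-1)/β · (π/β)/sin(π/β))^β satisfies ∫₀^∞ f*(t)² dt = 1 and ∫₀^∞ (1 - f*(t))² t^{-β} dt = ((β-1)^{β-1}/β^β)·(π/β / sin(π/β))^β. -/
open MeasureTheory Set Real Filter

lemma betaReal {a : ℝ} (ha : 0 < a) (ha1 : a < 1) :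
    ∫ x in Ioo (0:ℝ) 1, x ^ (a-1) * (1-x) ^ (-a) = π / Real.sin (π * a) := by
  have hs : 0 < Real.sin (π * a) := Real.sin_pos_of_pos_of_lt_pi (by positivity)
    (by nlinarith [Real.pi_pos])
  have hre : (0:ℝ) < Complex.re a := by simpa using ha
  have hre' : (0:ℝ) < Complex.re (1 - a) := by simp [Complex.sub_re]; linarith
  have h1 : Complex.Gamma a * Complex.Gamma (1 - a) =
      Complex.Gamma ((a:ℂ) + (1 - a)) * Complex.betaIntegral a (1 - a) :=
    Complex.Gamma_mul_Gamma_eq_betaIntegral hre hre'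
  rw [add_sub_cancel, Complex.Gamma_one, one_mul, Complex.Gamma_mul_Gamma_one_sub] at h1
  -- h1 : ↑π / Complex.sin (↑π * ↑a) = Complex.betaIntegral ↑a (1 - ↑a)
  have h2 : Complex.betaIntegral a (1 - a) =
      ((∫ x in Ioo (0:ℝ) 1, x ^ (a-1) * (1-x) ^ (-a) : ℝ) : ℂ) := by
    rw [Complex.betaIntegral]
    calc (∫ x in (0:ℝ)..1, (x:ℂ) ^ ((a:ℂ) - 1) * (1 - (x:ℂ)) ^ ((1:ℂ) - a - 1))
        = ∫ x in (0:ℝ)..1, ((x ^ (a-1) * (1-x) ^ (-a) : ℝ) : ℂ) := ?_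
      _ = ((∫ x in (0:ℝ)..1, x ^ (a-1) * (1-x) ^ (-a) : ℝ) : ℂ) :=
          intervalIntegral.integral_ofReal
      _ = _ := by
          rw [intervalIntegral.integral_of_le zero_le_one,
            MeasureTheory.integral_Ioc_eq_integral_Ioo]
    refine intervalIntegral.integral_congr fun x hx => ?_
    rw [uIcc_of_le zero_le_one] at hx
    obtain ⟨hx0, hx1⟩ := hx
    rw [show ((a:ℂ)-1) = ((a-1:ℝ):ℂ) by push_cast; ring,
      show ((1:ℂ)-(a:ℂ)-1) = ((-a:ℝ):ℂ) by push_cast; ring,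
      show (1-(x:ℂ)) = ((1-x:ℝ):ℂ) by push_cast; ring,
      ← Complex.ofReal_cpow hx0, ← Complex.ofReal_cpow (by linarith),
      ← Complex.ofReal_mul]
  rw [h2] at h1
  have : ((π / Real.sin (π * a) : ℝ) : ℂ) =
      ((∫ x in Ioo (0:ℝ) 1, x ^ (a-1) * (1-x) ^ (-a) : ℝ) : ℂ) := by
    rw [← h1]
    push_cast [Complex.ofReal_sin]
    norm_num
  exact_mod_cast this.symm


section
variable {a : ℝ}

lemma map_deriv (ha : 0 < a) (ha1 : a < 1) :
    ∀ u ∈ Ioo (0:ℝ) 1, HasDerivWithinAt (fun u => u / (1-u)) (((1-u)^2)⁻¹) (Ioo (0:ℝ) 1) u := by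
  intro u hu
  have h1u : (1:ℝ) - u ≠ 0 := by have := hu.2; intro h; linarith [sub_eq_zero.mp h]
  have := (hasDerivAt_id u).div ((hasDerivAt_id u).const_sub 1) h1u
  refine this.hasDerivWithinAt.congr_deriv ?_
  simp only [id]
  field_simp
  ring

lemma map_inj : InjOn (fun u => u / (1-u)) (Ioo (0:ℝ) 1) := by
  intro u hu v hv h
  have h1u : (1:ℝ) - u ≠ 0 := by have := hu.2; intro h; linarith [sub_eq_zero.mp h]
  have h1v : (1:ℝ) - v ≠ 0 := by have := hv.2; intro h; linarith [sub_eq_zero.mp h]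
  field_simp at h
  nlinarith [h]

lemma map_image : (fun u => u / (1-u)) '' (Ioo (0:ℝ) 1) = Ioi (0:ℝ) := by
  ext y
  simp only [mem_image, mem_Ioo, mem_Ioi]
  constructor
  · rintro ⟨u, ⟨hu0, hu1⟩, rfl⟩
    have h1u : (0:ℝ) < 1 - u := by linarith
    positivity
  · intro hy
    refine ⟨y / (1+y), ⟨by positivity, by rw [div_lt_one (by positivity)]; linarith⟩, ?_⟩
    have h1y : (1:ℝ) + y ≠ 0 := by positivity
    field_simp
    ring

lemma integrand_eq (ha : 0 < a) (ha1 : a < 1) :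
    ∀ u ∈ Ioo (0:ℝ) 1, |(((1-u)^2)⁻¹)| • ((u/(1-u)) ^ (a-1) / (1 + u/(1-u)))
      = u ^ (a-1) * (1-u) ^ (-a) := by
  intro u hu
  have hu0 : 0 < u := hu.1
  have h1u : 0 < 1 - u := by linarith [hu.2]
  have e1 : 1 + u / (1-u) = (1-u)⁻¹ := by field_simp; ring
  rw [e1, smul_eq_mul, abs_of_pos (by positivity), Real.div_rpow hu0.le h1u.le]
  rw [Real.rpow_sub h1u, Real.rpow_one, Real.rpow_neg h1u.le]
  have h2 : (1-u) ^ a ≠ 0 := by positivity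
  field_simp

lemma J_val (ha : 0 < a) (ha1 : a < 1) :
    ∫ x in Ioi (0:ℝ), x ^ (a-1) / (1+x) = π / Real.sin (π * a) := by
  rw [← betaReal ha ha1, ← map_image,
    integral_image_eq_integral_abs_deriv_smul measurableSet_Ioo (map_deriv ha ha1) map_inj]
  exact setIntegral_congr_fun measurableSet_Ioo (integrand_eq ha ha1)

lemma J_int (ha : 0 < a) (ha1 : a < 1) :
    IntegrableOn (fun x => x ^ (a-1) / (1+x)) (Ioi (0:ℝ)) := by
  have hre : (0:ℝ) < Complex.re a := by simpa using ha
  have hre' : (0:ℝ) < Complex.re (1 - a) := by simp [Complex.sub_re]; linarith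
  have hC := (Complex.betaIntegral_convergent hre hre')
  rw [intervalIntegrable_iff_integrableOn_Ioc_of_le zero_le_one] at hC
  have hC2 : IntegrableOn (fun x : ℝ =>
      ((x:ℂ) ^ ((a:ℂ) - 1) * (1 - (x:ℂ)) ^ ((1:ℂ) - a - 1)).re) (Ioo (0:ℝ) 1) :=
    (hC.mono_set Ioo_subset_Ioc_self).re
  have hbeta : IntegrableOn (fun x : ℝ => x ^ (a-1) * (1-x) ^ (-a)) (Ioo (0:ℝ) 1) := by
    refine hC2.congr_fun (fun x hx => ?_) measurableSet_Ioo
    obtain ⟨hx0, hx1⟩ := hx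
    beta_reduce
    rw [show ((a:ℂ)-1) = ((a-1:ℝ):ℂ) by push_cast; ring,
      show ((1:ℂ)-(a:ℂ)-1) = ((-a:ℝ):ℂ) by push_cast; ring,
      show (1-(x:ℂ)) = ((1-x:ℝ):ℂ) by push_cast; ring,
      ← Complex.ofReal_cpow hx0.le, ← Complex.ofReal_cpow (by linarith),
      ← Complex.ofReal_mul, Complex.ofReal_re]
  rw [← map_image]
  rw [integrableOn_image_iff_integrableOn_abs_deriv_smul measurableSet_Ioo
    (map_deriv ha ha1) map_inj]
  exact hbeta.congr_fun (fun u hu => (integrand_eq ha ha1 u hu).symm) measurableSet_Ioo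

end

open Topology

section
variable {a : ℝ}

lemma I1_int (ha : 0 < a) (ha1 : a < 1) :
    IntegrableOn (fun x => x ^ a / (1+x)^2) (Ioi (0:ℝ)) := by
  refine (J_int ha ha1).mono' ?_ ?_
  · apply Measurable.aestronglyMeasurable
    fun_prop
  · filter_upwards [ae_restrict_mem measurableSet_Ioi] with x hx
    have hx0 : (0:ℝ) < x := hx
    have h1x : (0:ℝ) < 1 + x := by linarith
    rw [Real.norm_eq_abs, abs_of_nonneg (by positivity)]
    rw [div_le_div_iff₀ (by positivity) (by positivity)]
    have e : x ^ a = x ^ (a-1) * x := by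
      rw [← Real.rpow_add_one hx0.ne']; ring_nf
    rw [e]
    nlinarith [Real.rpow_pos_of_pos hx0 (a-1)]

lemma I0_int (ha : 0 < a) (ha1 : a < 1) :
    IntegrableOn (fun x => x ^ (a-1) / (1+x)^2) (Ioi (0:ℝ)) := by
  refine (J_int ha ha1).mono' ?_ ?_
  · apply Measurable.aestronglyMeasurable
    fun_prop
  · filter_upwards [ae_restrict_mem measurableSet_Ioi] with x hx
    have hx0 : (0:ℝ) < x := hx
    have h1x : (0:ℝ) < 1 + x := by linarith
    rw [Real.norm_eq_abs, abs_of_nonneg (by positivity)]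
    rw [div_le_div_iff₀ (by positivity) (by positivity)]
    have h2 : (1+x) ≤ (1+x)^2 := by nlinarith
    exact mul_le_mul_of_nonneg_left h2 (Real.rpow_nonneg hx0.le _)

lemma I1_val (ha : 0 < a) (ha1 : a < 1) :
    ∫ x in Ioi (0:ℝ), x ^ a / (1+x)^2 = a * (π / Real.sin (π * a)) := by
  -- FTC with F x = x ^ a / (1+x)
  set F : ℝ → ℝ := fun x => x ^ a / (1+x) with hF
  have hderiv : ∀ x ∈ Ioi (0:ℝ), HasDerivAt F
      (a * (x ^ (a-1) / (1+x)) - x ^ a / (1+x)^2) x := by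
    intro x hx
    have hx0 : (0:ℝ) < x := hx
    have h1x : (0:ℝ) < 1 + x := by linarith
    have h1 : HasDerivAt (fun x : ℝ => x ^ a) (a * x ^ (a-1)) x :=
      Real.hasDerivAt_rpow_const (Or.inl hx0.ne')
    have h2 : HasDerivAt (fun x : ℝ => 1 + x) 1 x := by
      simpa using (hasDerivAt_id x).const_add 1
    have := h1.div h2 h1x.ne'
    refine this.congr_deriv ?_
    field_simp
  have hcont : ContinuousWithinAt F (Ici 0) 0 := by
    apply ContinuousAt.continuousWithinAt
    apply ContinuousAt.div
    · exact Real.continuousAt_rpow_const 0 a (Or.inr ha.le)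
    · fun_prop
    · norm_num
  have htend : Tendsto F atTop (𝓝 0) := by
    have h1 : Tendsto (fun x : ℝ => x ^ (a-1)) atTop (𝓝 0) := by
      have := tendsto_rpow_neg_atTop (y := 1 - a) (by linarith)
      simpa [neg_sub] using this
    refine tendsto_of_tendsto_of_tendsto_of_le_of_le' tendsto_const_nhds h1 ?_ ?_
    · filter_upwards [eventually_gt_atTop (0:ℝ)] with x hx
      have h1x : (0:ℝ) < 1 + x := by linarith
      positivity
    · filter_upwards [eventually_gt_atTop (0:ℝ)] with x hx
      have h1x : (0:ℝ) < 1 + x := by linarith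
      rw [hF]
      rw [div_le_iff₀ h1x]
      have e : x ^ (a-1) * x = x ^ a := by
        rw [← Real.rpow_add_one hx.ne']; norm_num
      nlinarith [Real.rpow_pos_of_pos hx (a-1)]
  have hint : IntegrableOn (fun x => a * (x ^ (a-1) / (1+x)) - x ^ a / (1+x)^2)
      (Ioi (0:ℝ)) := ((J_int ha ha1).const_mul a).sub (I1_int ha ha1)
  have key := integral_Ioi_of_hasDerivAt_of_tendsto hcont hderiv hint htend
  have hF0 : F 0 = 0 := by
    simp [hF, Real.zero_rpow ha.ne']
  rw [hF0, sub_zero] at key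
  rw [integral_sub ((J_int ha ha1).const_mul a) (I1_int ha ha1),
    MeasureTheory.integral_const_mul, J_val ha ha1] at key
  linarith [key]

lemma I0_val (ha : 0 < a) (ha1 : a < 1) :
    ∫ x in Ioi (0:ℝ), x ^ (a-1) / (1+x)^2 = (1-a) * (π / Real.sin (π * a)) := by
  have hsplit : ∀ x ∈ Ioi (0:ℝ),
      x ^ (a-1) / (1+x) = x ^ (a-1) / (1+x)^2 + x ^ a / (1+x)^2 := by
    intro x hx
    have hx0 : (0:ℝ) < x := hx
    have h1x : (0:ℝ) < 1 + x := by linarith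
    have e : x ^ a = x ^ (a-1) * x := by
      rw [← Real.rpow_add_one hx0.ne']; ring_nf
    rw [e]
    field_simp
  have : ∫ x in Ioi (0:ℝ), x ^ (a-1) / (1+x)
      = (∫ x in Ioi (0:ℝ), x ^ (a-1) / (1+x)^2) + ∫ x in Ioi (0:ℝ), x ^ a / (1+x)^2 := by
    rw [← integral_add (I0_int ha ha1) (I1_int ha ha1)]
    exact setIntegral_congr_fun measurableSet_Ioi hsplit
  rw [J_val ha ha1, I1_val ha ha1] at this
  linarith [this]

end


theorem stmt_1 (β : ℝ) (hβ : 1 < β)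
    (μ : ℝ) (hμ : μ = ((β-1)/β * ((π/β) / Real.sin (π/β))) ^ β)
    (f : ℝ → ℝ) (hf : ∀ t, f t = 1 / (1 + μ * t ^ β)) :
    (∫ t in Ioi (0:ℝ), (f t)^2) = 1 ∧
    (∫ t in Ioi (0:ℝ), (1 - f t)^2 * t ^ (-β)) =
      (β-1) ^ (β-1) / β ^ β * ((π/β) / Real.sin (π/β)) ^ β := by
  have hβ0 : (0:ℝ) < β := by linarith
  set s : ℝ := (π/β) / Real.sin (π/β) with hs_def
  set c : ℝ := (β-1)/β * s with hc_def
  set a : ℝ := 1/β with ha_def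
  have ha : 0 < a := by positivity
  have ha1 : a < 1 := by rw [ha_def, div_lt_one hβ0]; exact hβ
  have hsin : 0 < Real.sin (π/β) := by
    apply Real.sin_pos_of_pos_of_lt_pi
    · positivity
    · rw [div_lt_iff₀ hβ0]; nlinarith [Real.pi_pos]
  have hs : 0 < s := by rw [hs_def]; positivity
  have hc : 0 < c := by
    rw [hc_def]; have h1 : (0:ℝ) < β - 1 := by linarith
    positivity
  have hμc : μ = c ^ β := hμ
  have hμpos : 0 < μ := by rw [hμc]; exact Real.rpow_pos_of_pos hc β
  have hπa : π * a = π / β := by rw [ha_def]; ring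
  have haβ : a * β = 1 := by rw [ha_def]; field_simp
  have hI0 := I0_val ha ha1
  have hI1 := I1_val ha ha1
  have hμa : μ ^ (1-a) * μ⁻¹ = c⁻¹ := by
    rw [← Real.rpow_neg_one μ, ← Real.rpow_add hμpos, hμc, ← Real.rpow_mul hc.le]
    rw [show β * (1 - a + -1) = -1 by rw [ha_def]; field_simp; try ring, Real.rpow_neg_one]
  have hμ1a : μ ^ (1-a) = c ^ (β-1) := by
    rw [hμc, ← Real.rpow_mul hc.le]
    congr 1
    rw [ha_def]; field_simp; try ring
  have hone : μ ^ (1-a) * μ ^ (a-1) = 1 := by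
    rw [← Real.rpow_add hμpos]; norm_num
  have hone2 : μ ^ (1-a) * μ ^ a = μ := by
    rw [← Real.rpow_add hμpos]; norm_num
  constructor
  · -- first integral
    have key := MeasureTheory.integral_comp_rpow_Ioi_of_pos
      (g := fun t : ℝ => (1/(1+μ*t^β))^2) (p := a) ha
    have e1 : (∫ t in Ioi (0:ℝ), (f t)^2)
        = ∫ x in Ioi (0:ℝ), (a * x ^ (a-1)) •
            ((fun t : ℝ => (1/(1+μ*t^β))^2) (x ^ a)) := by
      rw [key]
      simp only [hf]
    have e2 : ∀ x ∈ Ioi (0:ℝ), (a * x ^ (a-1)) •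
        ((fun t : ℝ => (1/(1+μ*t^β))^2) (x ^ a))
        = μ ^ (1-a) * (a * ((μ*x) ^ (a-1) / (1+μ*x)^2)) := by
      intro x hx
      have hx0 : (0:ℝ) < x := hx
      simp only [smul_eq_mul]
      rw [← Real.rpow_mul hx0.le, haβ, Real.rpow_one,
        Real.mul_rpow hμpos.le hx0.le]
      generalize (1 + μ * x : ℝ) = B
      calc a * x ^ (a-1) * (1/B)^2
          = (μ ^ (1-a) * μ ^ (a-1)) * (a * x ^ (a-1) * (1/B)^2) := by
            rw [hone, one_mul]
        _ = μ ^ (1-a) * (a * ((μ ^ (a-1) * x ^ (a-1)) / B^2)) := by ring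
    have e3 : (∫ x in Ioi (0:ℝ), a * ((μ*x) ^ (a-1) / (1+μ*x)^2))
        = μ⁻¹ * ∫ y in Ioi (0:ℝ), a * (y ^ (a-1) / (1+y)^2) := by
      have := integral_comp_mul_left_Ioi (fun y => a * (y ^ (a-1) / (1+y)^2)) 0 hμpos
      simpa [mul_zero, smul_eq_mul] using this
    have e4 : (∫ y in Ioi (0:ℝ), a * (y ^ (a-1) / (1+y)^2))
        = a * ((1-a) * (π / Real.sin (π*a))) := by
      rw [MeasureTheory.integral_const_mul, hI0]
    calc (∫ t in Ioi (0:ℝ), (f t)^2)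
        = ∫ x in Ioi (0:ℝ), μ ^ (1-a) * (a * ((μ*x) ^ (a-1) / (1+μ*x)^2)) := by
          rw [e1]; exact setIntegral_congr_fun measurableSet_Ioi e2
      _ = μ ^ (1-a) * ∫ x in Ioi (0:ℝ), a * ((μ*x) ^ (a-1) / (1+μ*x)^2) :=
          MeasureTheory.integral_const_mul _ _
      _ = μ ^ (1-a) * (μ⁻¹ * (a * ((1-a) * (π / Real.sin (π*a))))) := by
          rw [e3, e4]
      _ = c⁻¹ * (a * ((1-a) * (π / Real.sin (π*a)))) := by
          rw [← mul_assoc, hμa]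
      _ = 1 := by
          rw [hπa, hc_def, hs_def, ha_def]
          have h1 : β - 1 ≠ 0 := by intro h; linarith [sub_eq_zero.mp h]
          have h2 : Real.sin (π/β) ≠ 0 := hsin.ne'
          have h3 : π ≠ 0 := Real.pi_ne_zero
          field_simp
          try ring
  · -- second integral
    have e0 : ∀ t ∈ Ioi (0:ℝ), (1 - f t)^2 * t ^ (-β)
        = μ^2 * (t^β / (1+μ*t^β)^2) := by
      intro t ht
      have ht0 : (0:ℝ) < t := ht
      have hT : (0:ℝ) < t ^ β := Real.rpow_pos_of_pos ht0 β
      have hB : (0:ℝ) < 1 + μ * t ^ β := by positivity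
      rw [hf, Real.rpow_neg ht0.le]
      field_simp
      ring
    have key := MeasureTheory.integral_comp_rpow_Ioi_of_pos
      (g := fun t : ℝ => μ^2 * (t^β / (1+μ*t^β)^2)) (p := a) ha
    have e1 : (∫ t in Ioi (0:ℝ), (1 - f t)^2 * t ^ (-β))
        = ∫ x in Ioi (0:ℝ), (a * x ^ (a-1)) •
            ((fun t : ℝ => μ^2 * (t^β / (1+μ*t^β)^2)) (x ^ a)) := by
      rw [key]
      exact setIntegral_congr_fun measurableSet_Ioi e0
    have e2 : ∀ x ∈ Ioi (0:ℝ), (a * x ^ (a-1)) •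
        ((fun t : ℝ => μ^2 * (t^β / (1+μ*t^β)^2)) (x ^ a))
        = μ ^ (1-a) * ((a*μ) * ((μ*x) ^ a / (1+μ*x)^2)) := by
      intro x hx
      have hx0 : (0:ℝ) < x := hx
      simp only [smul_eq_mul]
      rw [← Real.rpow_mul hx0.le, haβ, Real.rpow_one,
        Real.mul_rpow hμpos.le hx0.le]
      have hxa : x ^ (a-1) * x = x ^ a := by
        rw [← Real.rpow_add_one hx0.ne']; ring_nf
      generalize (1 + μ * x : ℝ) = B
      calc a * x ^ (a-1) * (μ^2 * (x / B^2))
          = a * μ^2 * ((x ^ (a-1) * x) / B^2) := by ring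
        _ = a * μ^2 * (x ^ a / B^2) := by rw [hxa]
        _ = μ ^ (1-a) * ((a*μ) * ((μ ^ a * x ^ a) / B^2)) := by
            linear_combination (-(a * μ * x ^ a / B^2)) * hone2
    have e3 : (∫ x in Ioi (0:ℝ), (a*μ) * ((μ*x) ^ a / (1+μ*x)^2))
        = μ⁻¹ * ∫ y in Ioi (0:ℝ), (a*μ) * (y ^ a / (1+y)^2) := by
      have := integral_comp_mul_left_Ioi (fun y => (a*μ) * (y ^ a / (1+y)^2)) 0 hμpos
      simpa [mul_zero, smul_eq_mul] using this
    have e4 : (∫ y in Ioi (0:ℝ), (a*μ) * (y ^ a / (1+y)^2))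
        = (a*μ) * (a * (π / Real.sin (π*a))) := by
      rw [MeasureTheory.integral_const_mul, hI1]
    have hcb : c ^ (β-1) = (β-1) ^ (β-1) / β ^ (β-1) * (s^β / s) := by
      have hb1 : (0:ℝ) ≤ (β-1)/β := by
        have : (0:ℝ) < β - 1 := by linarith
        positivity
      rw [hc_def, Real.mul_rpow hb1 hs.le,
        Real.div_rpow (by linarith) hβ0.le, Real.rpow_sub hs, Real.rpow_one]
    have hββ : β ^ (β-1) * β = β ^ β := by
      rw [← Real.rpow_add_one hβ0.ne']; ring_nf
    calc (∫ t in Ioi (0:ℝ), (1 - f t)^2 * t ^ (-β))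
        = ∫ x in Ioi (0:ℝ), μ ^ (1-a) * ((a*μ) * ((μ*x) ^ a / (1+μ*x)^2)) := by
          rw [e1]; exact setIntegral_congr_fun measurableSet_Ioi e2
      _ = μ ^ (1-a) * ∫ x in Ioi (0:ℝ), (a*μ) * ((μ*x) ^ a / (1+μ*x)^2) :=
          MeasureTheory.integral_const_mul _ _
      _ = μ ^ (1-a) * (μ⁻¹ * ((a*μ) * (a * (π / Real.sin (π*a))))) := by
          rw [e3, e4]
      _ = μ ^ (1-a) * (a^2 * (π / Real.sin (π*a))) * (μ * μ⁻¹) := by ring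
      _ = c ^ (β-1) * (a^2 * (π / Real.sin (π*a))) := by
          rw [mul_inv_cancel₀ hμpos.ne', mul_one, hμ1a]
      _ = (β-1) ^ (β-1) / β ^ β * s ^ β := by
          rw [hπa, hcb, ← hββ, ha_def]
          have h2 : Real.sin (π/β) ≠ 0 := hsin.ne'
          have h4 : β ^ (β-1) ≠ 0 := (Real.rpow_pos_of_pos hβ0 _).ne'
          have h5 : s ≠ 0 := hs.ne'
          rw [hs_def]
          field_simp
          try ring
end

section
/- Let H be a Hilbert space and γ a bounded self-adjoint operator on H with 0 ≤ γ ≤ 1. Then for any bounded self-adjoint operator F on H and any ε > 0, γ ≤ (1+ε) F γ F + (1+1/ε)(1-F)². -/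
open ContinuousLinearMap

set_option maxHeartbeats 1000000

lemma aux_smul_pos {H : Type*} [NormedAddCommGroup H] [InnerProductSpace ℂ H] [CompleteSpace H]
    {c : ℝ} (hc : 0 ≤ c) {T : H →L[ℂ] H} (hT : T.IsPositive) : (c • T).IsPositive := by
  refine isPositive_def'.mpr ⟨IsSelfAdjoint.smul (isSelfAdjoint_iff.mpr (star_trivial c)) hT.isSelfAdjoint, fun x => ?_⟩
  have := hT.2 x
  simp only [reApplyInnerSelf, smul_apply] at *
  rw [RCLike.real_smul_eq_coe_smul (K := ℂ), inner_smul_left]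
  simpa [RCLike.conj_ofReal, RCLike.re_ofReal_mul] using mul_nonneg hc this

theorem stmt_6 {H : Type*} [NormedAddCommGroup H] [InnerProductSpace ℂ H] [CompleteSpace H]
    (γ F : H →L[ℂ] H) (hγpos : γ.IsPositive) (hγle : ((1 : H →L[ℂ] H) - γ).IsPositive)
    (hF : IsSelfAdjoint F) (ε : ℝ) (hε : 0 < ε) :
    ((1 + ε) • (F ∘L γ ∘L F) + (1 + ε⁻¹) • (((1 : H →L[ℂ] H) - F) ∘L ((1 : H →L[ℂ] H) - F))
      - γ).IsPositive := by
  set G : H →L[ℂ] H := 1 - F with hG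
  set S : H →L[ℂ] H := ε • F - G with hS
  have hGsa : IsSelfAdjoint G := by
    rw [hG]; exact ((IsSelfAdjoint.one (H →L[ℂ] H))).sub hF
  have hSsa : IsSelfAdjoint S := by
    rw [hS]; exact (IsSelfAdjoint.smul (isSelfAdjoint_iff.mpr (star_trivial ε)) hF).sub hGsa
  have key : (1 + ε) • (F ∘L γ ∘L F) + (1 + ε⁻¹) • (G ∘L G) - γ
      = ε⁻¹ • (S ∘L γ ∘L S) + (1 + ε⁻¹) • (G ∘L ((1 : H →L[ℂ] H) - γ) ∘L G) := by
    ext x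
    simp only [hS, hG, add_apply, sub_apply, smul_apply, comp_apply, one_apply_eq_self, map_sub,
      map_add, map_smul, ContinuousLinearMap.map_smul_of_tower]
    match_scalars <;> field_simp <;> ring
  rw [key]
  have h1 : (S ∘L γ ∘L S).IsPositive := by
    simpa [hSsa.adjoint_eq] using hγpos.adjoint_conj S
  have h2 : (G ∘L ((1 : H →L[ℂ] H) - γ) ∘L G).IsPositive := by
    simpa [hGsa.adjoint_eq] using hγle.adjoint_conj G
  exact (aux_smul_pos (by positivity) h1).add (aux_smul_pos (by positivity) h2)
end

section
/- In dimension d = 1, the constant C₁ := inf { (∫₀^∞ φ²)^{1/2} · (1/2)∫₀^∞ (1 − ∫₀^∞ φ(s) f(st) ds)² t^{-3/2} dt }, with infimum over measurable f, φ : (0,∞) → [0,∞) satisfying ∫₀^∞ f² = ∫₀^∞ φ = 1, satisfies C₁ ≥ 1/3. -/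
open MeasureTheory Set Real ENNReal Filter Topology


lemma lint_scale {c : ℝ} (hc : 0 < c) {G : ℝ → ℝ≥0∞} (hG : Measurable G) {S : Set ℝ}
    (hS : MeasurableSet S) :
    ∫⁻ v in (fun v : ℝ => c * v) ⁻¹' S, G (c * v) = ENNReal.ofReal c⁻¹ * ∫⁻ u in S, G u := by
  have hT : Measurable fun v : ℝ => c * v := measurable_const_mul c
  calc ∫⁻ v in (fun v : ℝ => c * v) ⁻¹' S, G (c * v)
      = ∫⁻ u, G u ∂((volume.restrict ((fun v : ℝ => c*v) ⁻¹' S)).map (fun v => c*v)) :=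
        (lintegral_map hG hT).symm
    _ = ∫⁻ u, G u ∂((volume.map (fun v : ℝ => c*v)).restrict S) := by
        rw [Measure.restrict_map hT hS]
    _ = ∫⁻ u, G u ∂((ENNReal.ofReal |c⁻¹| • volume).restrict S) := by
        rw [Real.map_volume_mul_left hc.ne']
    _ = ENNReal.ofReal c⁻¹ * ∫⁻ u in S, G u := by
        rw [Measure.restrict_smul, lintegral_smul_measure, abs_of_pos (inv_pos.2 hc), smul_eq_mul]

lemma lint_scale_Ioi {c : ℝ} (hc : 0 < c) {G : ℝ → ℝ≥0∞} (hG : Measurable G) :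
    ∫⁻ v in Ioi (0:ℝ), G (c * v) = ENNReal.ofReal c⁻¹ * ∫⁻ u in Ioi (0:ℝ), G u := by
  have h : (fun v : ℝ => c * v) ⁻¹' (Ioi 0) = Ioi 0 := by
    ext v; simp only [mem_preimage, mem_Ioi]
    constructor
    · intro h; nlinarith
    · intro h; exact mul_pos hc h
  nth_rewrite 1 [← h]
  rw [lint_scale hc hG measurableSet_Ioi]

lemma lint_scale_Icc {c : ℝ} (hc : 0 < c) {G : ℝ → ℝ≥0∞} (hG : Measurable G) (p q : ℝ) :
    ∫⁻ v in Icc p q, G (c * v) = ENNReal.ofReal c⁻¹ * ∫⁻ u in Icc (c*p) (c*q), G u := by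
  have h : (fun v : ℝ => c * v) ⁻¹' (Icc (c*p) (c*q)) = Icc p q := by
    ext v; simp [mul_le_mul_iff_right₀ hc]
  rw [← h]; exact lint_scale hc hG measurableSet_Icc

lemma lint_CS {F : ℝ → ℝ≥0∞} (hF : Measurable F) (S : Set ℝ) :
    ∫⁻ u in S, F u ≤ (∫⁻ u in S, (F u)^2) ^ ((1:ℝ)/2) * (volume S) ^ ((1:ℝ)/2) := by
  have hconj : Real.HolderConjugate 2 2 := Real.HolderConjugate.two_two
  have h := ENNReal.lintegral_mul_le_Lp_mul_Lq (volume.restrict S) hconj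
    hF.aemeasurable (aemeasurable_const (b := (1:ℝ≥0∞)))
  simp only [Pi.mul_apply, Pi.one_apply, mul_one, ENNReal.one_rpow, lintegral_one,
    Measure.restrict_apply_univ] at h
  calc ∫⁻ u in S, F u ≤ (∫⁻ u in S, (F u) ^ (2:ℝ)) ^ ((1:ℝ)/2) * (volume S) ^ ((1:ℝ)/2) := h
  _ = (∫⁻ u in S, (F u)^2) ^ ((1:ℝ)/2) * (volume S) ^ ((1:ℝ)/2) := by
      congr 1; congr 1; refine lintegral_congr fun u => ?_
      rw [show (2:ℝ) = ((2:ℕ):ℝ) by norm_num, ENNReal.rpow_natCast]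


lemma Icompute {a : ℝ} (ha : 0 < a) :
    ∫ t in Ioi a, (1 - a ^ ((1:ℝ)/2) * t ^ (-(1:ℝ)/2)) ^ 2 * t ^ (-(3:ℝ)/2)
      = 2/3 * a ^ (-(1:ℝ)/2) := by
  set G : ℝ → ℝ := fun t => -2 * t ^ (-(1:ℝ)/2) + 2 * a ^ ((1:ℝ)/2) * t ^ (-(1:ℝ))
      - (2/3) * a * t ^ (-(3:ℝ)/2) with hG
  set g' : ℝ → ℝ := fun t => t ^ (-(3:ℝ)/2) - 2 * a ^ ((1:ℝ)/2) * t ^ (-(2:ℝ))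
      + a * t ^ (-(5:ℝ)/2) with hg'
  have hderiv : ∀ t ∈ Ici a, HasDerivAt G (g' t) t := by
    intro t ht
    have ht0 : (0:ℝ) < t := lt_of_lt_of_le ha ht
    have h1 : HasDerivAt (fun t : ℝ => t ^ (-(1:ℝ)/2)) ((-(1:ℝ)/2) * t ^ (-(3:ℝ)/2)) t := by
      have := Real.hasDerivAt_rpow_const (x := t) (p := -(1:ℝ)/2) (Or.inl ht0.ne')
      convert this using 2; norm_num
    have h2 : HasDerivAt (fun t : ℝ => t ^ (-(1:ℝ))) ((-(1:ℝ)) * t ^ (-(2:ℝ))) t := by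
      have := Real.hasDerivAt_rpow_const (x := t) (p := -(1:ℝ)) (Or.inl ht0.ne')
      convert this using 2; norm_num
    have h3 : HasDerivAt (fun t : ℝ => t ^ (-(3:ℝ)/2)) ((-(3:ℝ)/2) * t ^ (-(5:ℝ)/2)) t := by
      have := Real.hasDerivAt_rpow_const (x := t) (p := -(3:ℝ)/2) (Or.inl ht0.ne')
      convert this using 2; norm_num
    have hh := ((h1.const_mul (-2:ℝ)).add (h2.const_mul (2 * a ^ ((1:ℝ)/2)))).sub
      (h3.const_mul ((2:ℝ)/3 * a))
    exact hh.congr_deriv (by simp only [g']; ring)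
  have hint : IntegrableOn g' (Ioi a) := by
    have hA : IntegrableOn (fun t : ℝ => t ^ (-(3:ℝ)/2)) (Ioi a) := by
      have := integrableOn_Ioi_rpow_of_lt (a := -(3:ℝ)/2) (by norm_num) ha
      exact this
    have hB : IntegrableOn (fun t : ℝ => t ^ (-(2:ℝ))) (Ioi a) :=
      integrableOn_Ioi_rpow_of_lt (by norm_num) ha
    have hC : IntegrableOn (fun t : ℝ => t ^ (-(5:ℝ)/2)) (Ioi a) :=
      integrableOn_Ioi_rpow_of_lt (by norm_num) ha
    exact (hA.sub (hB.const_mul _)).add (hC.const_mul _)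
  have htend : Tendsto G atTop (𝓝 0) := by
    have l1 : Tendsto (fun t : ℝ => t ^ (-(1:ℝ)/2)) atTop (𝓝 0) := by
      have := tendsto_rpow_neg_atTop (y := (1:ℝ)/2) (by norm_num)
      simpa [neg_div] using this
    have l2 : Tendsto (fun t : ℝ => t ^ (-(1:ℝ))) atTop (𝓝 0) :=
      tendsto_rpow_neg_atTop (by norm_num)
    have l3 : Tendsto (fun t : ℝ => t ^ (-(3:ℝ)/2)) atTop (𝓝 0) := by
      have := tendsto_rpow_neg_atTop (y := (3:ℝ)/2) (by norm_num)
      simpa [neg_div] using this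
    have h := ((l1.const_mul (-2:ℝ)).add (l2.const_mul (2 * a ^ ((1:ℝ)/2)))).sub
      (l3.const_mul ((2:ℝ)/3 * a))
    have : (-2:ℝ) * 0 + 2 * a ^ ((1:ℝ)/2) * 0 - 2/3 * a * 0 = 0 := by ring
    rw [this] at h
    exact h
  have hFTC := integral_Ioi_of_hasDerivAt_of_tendsto' hderiv hint htend
  have hEq : EqOn (fun t : ℝ => (1 - a ^ ((1:ℝ)/2) * t ^ (-(1:ℝ)/2)) ^ 2 * t ^ (-(3:ℝ)/2)) g'
      (Ioi a) := by
    intro t ht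
    have ht0 : (0:ℝ) < t := lt_trans ha ht
    have hr2 : a ^ ((1:ℝ)/2) * a ^ ((1:ℝ)/2) = a := by
      rw [← Real.rpow_add ha]; norm_num
    have ht1 : t ^ (-(1:ℝ)/2) * t ^ (-(1:ℝ)/2) = t ^ (-(1:ℝ)) := by
      rw [← Real.rpow_add ht0]; norm_num
    have ht2 : t ^ (-(1:ℝ)/2) * t ^ (-(3:ℝ)/2) = t ^ (-(2:ℝ)) := by
      rw [← Real.rpow_add ht0]; norm_num
    have ht3 : t ^ (-(1:ℝ)) * t ^ (-(3:ℝ)/2) = t ^ (-(5:ℝ)/2) := by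
      rw [← Real.rpow_add ht0]; norm_num
    show (1 - a ^ ((1:ℝ)/2) * t ^ (-(1:ℝ)/2)) ^ 2 * t ^ (-(3:ℝ)/2) = _
    calc (1 - a ^ ((1:ℝ)/2) * t ^ (-(1:ℝ)/2)) ^ 2 * t ^ (-(3:ℝ)/2)
        = t ^ (-(3:ℝ)/2) - 2 * a ^ ((1:ℝ)/2) * (t ^ (-(1:ℝ)/2) * t ^ (-(3:ℝ)/2))
          + (a ^ ((1:ℝ)/2) * a ^ ((1:ℝ)/2)) * ((t ^ (-(1:ℝ)/2) * t ^ (-(1:ℝ)/2)) * t ^ (-(3:ℝ)/2)) := by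
          ring
      _ = g' t := by rw [ht2, hr2, ht1, ht3]
  rw [setIntegral_congr_fun measurableSet_Ioi hEq, hFTC]
  have ha1 : a ^ ((1:ℝ)/2) * a ^ (-(1:ℝ)) = a ^ (-(1:ℝ)/2) := by
    rw [← Real.rpow_add ha]; norm_num
  have ha2 : a * a ^ (-(3:ℝ)/2) = a ^ (-(1:ℝ)/2) := by
    nth_rewrite 1 [← Real.rpow_one a]
    rw [← Real.rpow_add ha]; norm_num
  simp only [hG]
  calc 0 - (-2 * a ^ (-(1:ℝ)/2) + 2 * a ^ ((1:ℝ)/2) * a ^ (-(1:ℝ)) - 2/3 * a * a ^ (-(3:ℝ)/2))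
      = 2 * a ^ (-(1:ℝ)/2) - 2 * (a ^ ((1:ℝ)/2) * a ^ (-(1:ℝ))) + 2/3 * (a * a ^ (-(3:ℝ)/2)) := by
        ring
    _ = 2/3 * a ^ (-(1:ℝ)/2) := by rw [ha1, ha2]; ring


lemma keyIntegral {a : ℝ} (ha : 0 < a) :
    ∫⁻ t in Ioi a, ENNReal.ofReal ((1 - a ^ ((1:ℝ)/2) * t ^ (-(1:ℝ)/2)) ^ 2 * t ^ (-(3:ℝ)/2))
      = ENNReal.ofReal (2/3 * a ^ (-(1:ℝ)/2)) := by
  have hEqint : IntegrableOn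
      (fun t : ℝ => (1 - a ^ ((1:ℝ)/2) * t ^ (-(1:ℝ)/2)) ^ 2 * t ^ (-(3:ℝ)/2)) (Ioi a) := by
    have hA : IntegrableOn (fun t : ℝ => t ^ (-(3:ℝ)/2)) (Ioi a) :=
      integrableOn_Ioi_rpow_of_lt (by norm_num) ha
    have hB : IntegrableOn (fun t : ℝ => t ^ (-(2:ℝ))) (Ioi a) :=
      integrableOn_Ioi_rpow_of_lt (by norm_num) ha
    have hC : IntegrableOn (fun t : ℝ => t ^ (-(5:ℝ)/2)) (Ioi a) :=
      integrableOn_Ioi_rpow_of_lt (by norm_num) ha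
    have hint : IntegrableOn (fun t : ℝ => t ^ (-(3:ℝ)/2) - 2 * a ^ ((1:ℝ)/2) * t ^ (-(2:ℝ))
        + a * t ^ (-(5:ℝ)/2)) (Ioi a) :=
      (hA.sub (hB.const_mul _)).add (hC.const_mul _)
    refine hint.congr_fun (fun t ht => ?_) measurableSet_Ioi
    have ht0 : (0:ℝ) < t := lt_trans ha ht
    have hr2 : a ^ ((1:ℝ)/2) * a ^ ((1:ℝ)/2) = a := by
      rw [← Real.rpow_add ha]; norm_num
    have ht1 : t ^ (-(1:ℝ)/2) * t ^ (-(1:ℝ)/2) = t ^ (-(1:ℝ)) := by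
      rw [← Real.rpow_add ht0]; norm_num
    have ht2 : t ^ (-(1:ℝ)/2) * t ^ (-(3:ℝ)/2) = t ^ (-(2:ℝ)) := by
      rw [← Real.rpow_add ht0]; norm_num
    have ht3 : t ^ (-(1:ℝ)) * t ^ (-(3:ℝ)/2) = t ^ (-(5:ℝ)/2) := by
      rw [← Real.rpow_add ht0]; norm_num
    calc t ^ (-(3:ℝ)/2) - 2 * a ^ ((1:ℝ)/2) * t ^ (-(2:ℝ)) + a * t ^ (-(5:ℝ)/2)
        = t ^ (-(3:ℝ)/2) - 2 * a ^ ((1:ℝ)/2) * (t ^ (-(1:ℝ)/2) * t ^ (-(3:ℝ)/2))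
          + (a ^ ((1:ℝ)/2) * a ^ ((1:ℝ)/2)) * ((t ^ (-(1:ℝ)/2) * t ^ (-(1:ℝ)/2)) * t ^ (-(3:ℝ)/2)) := by
          rw [ht2, hr2, ht1, ht3]
      _ = (1 - a ^ ((1:ℝ)/2) * t ^ (-(1:ℝ)/2)) ^ 2 * t ^ (-(3:ℝ)/2) := by ring
  have hnn : 0 ≤ᵐ[volume.restrict (Ioi a)]
      (fun t : ℝ => (1 - a ^ ((1:ℝ)/2) * t ^ (-(1:ℝ)/2)) ^ 2 * t ^ (-(3:ℝ)/2)) := by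
    refine (ae_restrict_iff' measurableSet_Ioi).2 (ae_of_all _ fun t ht => ?_)
    have ht0 : (0:ℝ) < t := lt_trans ha ht
    exact mul_nonneg (sq_nonneg _) (Real.rpow_nonneg ht0.le _)
  rw [← ofReal_integral_eq_lintegral_ofReal hEqint hnn, Icompute ha]


lemma no_unit {f φ : ℝ → ℝ} (hf : Measurable f) (hφ : Measurable φ)
    (hF2 : ∫⁻ u in Ioi (0:ℝ), (ENNReal.ofReal (f u))^2 = 1)
    (hΦ1 : ∫⁻ s in Ioi (0:ℝ), ENNReal.ofReal (φ s) = 1)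
    (hg : ∀ᵐ t ∂(volume.restrict (Ioi (0:ℝ))),
      (∫⁻ s in Ioi (0:ℝ), ENNReal.ofReal (φ s) * ENNReal.ofReal (f (s * t))) = 1) :
    False := by
  set F : ℝ → ℝ≥0∞ := fun u => ENNReal.ofReal (f u) with hFdef
  set Φ : ℝ → ℝ≥0∞ := fun s => ENNReal.ofReal (φ s) with hΦdef
  have hFm : Measurable F := hf.ennreal_ofReal
  have hΦm : Measurable Φ := hφ.ennreal_ofReal
  set H : ℝ → ℝ≥0∞ := fun t => ∫⁻ s in Ioi (0:ℝ), Φ s * F (s * t) with hHdef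
  have hHmeas : Measurable H := by
    have hunc : Measurable fun p : ℝ × ℝ => Φ p.2 * F (p.2 * p.1) :=
      ((hφ.comp measurable_snd).ennreal_ofReal).mul
        ((hf.comp (measurable_snd.mul measurable_fst)).ennreal_ofReal)
    exact hunc.lintegral_prod_right'
  set N : Set ℝ := {t : ℝ | t ∈ Ioi (0:ℝ) ∧ H t ≠ 1} with hNdef
  have hNmeas : MeasurableSet N := by
    have : N = Ioi (0:ℝ) ∩ H ⁻¹' ({1}ᶜ) := by ext t; simp [hNdef]
    rw [this]
    exact measurableSet_Ioi.inter (hHmeas (measurableSet_singleton 1).compl)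
  have hN0 : volume N = 0 := by
    have h1 : ∀ᵐ t ∂volume, t ∈ Ioi (0:ℝ) → H t = 1 :=
      (ae_restrict_iff' measurableSet_Ioi).mp hg
    rw [ae_iff] at h1
    have : N = {t : ℝ | ¬(t ∈ Ioi (0:ℝ) → H t = 1)} := by
      ext t; simp [hNdef, _root_.not_imp]
    rw [this]; exact h1
  -- the smoothed identity
  have hstar : ∀ x : ℝ, 0 < x → (∫⁻ s in Ioi (0:ℝ), Φ s *
      (ENNReal.ofReal (s*x)⁻¹ * ∫⁻ u in Icc (s*x) (4*(s*x)), F u)) = 3 := by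
    intro x hx
    have hpre : volume ((fun v : ℝ => v * x) ⁻¹' N) = 0 := by
      have hmap := Real.map_volume_mul_right hx.ne'
      have happ := Measure.map_apply (measurable_mul_const x) hNmeas (μ := volume)
      rw [hmap] at happ
      have : ENNReal.ofReal |x⁻¹| * volume N = volume ((fun v : ℝ => v * x) ⁻¹' N) := by
        simpa using happ
      rw [← this, hN0, mul_zero]
    have step1 : ∫⁻ v in Icc (1:ℝ) 4, H (v * x) = 3 := by
      have h1 : ∀ᵐ v ∂volume, v ∉ (fun v : ℝ => v * x) ⁻¹' N := by
        rw [ae_iff]; simp only [not_not]; exact hpre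
      have hae : ∀ᵐ v ∂(volume.restrict (Icc (1:ℝ) 4)), H (v * x) = 1 := by
        refine (ae_restrict_iff' measurableSet_Icc).2 ?_
        filter_upwards [h1] with v hv hvIcc
        by_contra hne
        exact hv ⟨mul_pos (lt_of_lt_of_le one_pos hvIcc.1) hx, hne⟩
      calc ∫⁻ v in Icc (1:ℝ) 4, H (v * x) = ∫⁻ _ in Icc (1:ℝ) 4, 1 := lintegral_congr_ae hae
        _ = volume (Icc (1:ℝ) 4) := setLIntegral_one _
        _ = 3 := by
            rw [Real.volume_Icc, show (4:ℝ) - 1 = ((3:ℕ):ℝ) by norm_num]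
            simp
    have hunc2 : Measurable (Function.uncurry fun (v s : ℝ) => Φ s * F (s * (v * x))) := by
      refine Measurable.mul (f := fun p : ℝ × ℝ => Φ p.2) (g := fun p : ℝ × ℝ => F (p.2 * (p.1 * x))) ?_ ?_
      · exact (hφ.comp measurable_snd).ennreal_ofReal
      · exact (hf.comp (measurable_snd.mul (measurable_fst.mul_const x))).ennreal_ofReal
    have step2 : ∫⁻ v in Icc (1:ℝ) 4, H (v * x)
        = ∫⁻ s in Ioi (0:ℝ), ∫⁻ v in Icc (1:ℝ) 4, Φ s * F (s * (v * x)) := by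
      have : ∀ v : ℝ, H (v * x) = ∫⁻ s in Ioi (0:ℝ), Φ s * F (s * (v * x)) := fun v => rfl
      simp only [this]
      exact lintegral_lintegral_swap hunc2.aemeasurable
    have step3 : ∀ s : ℝ, s ∈ Ioi (0:ℝ) →
        (∫⁻ v in Icc (1:ℝ) 4, Φ s * F (s * (v * x)))
        = Φ s * (ENNReal.ofReal (s*x)⁻¹ * ∫⁻ u in Icc (s*x) (4*(s*x)), F u) := by
      intro s hs
      rw [lintegral_const_mul' _ _ ENNReal.ofReal_ne_top]
      congr 1
      have hpt : ∀ v : ℝ, F (s * (v * x)) = F ((s*x) * v) := by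
        intro v; congr 1; ring
      simp only [hpt]
      rw [lint_scale_Icc (mul_pos hs hx) hFm 1 4]
      rw [mul_one, show (s*x)*4 = 4*(s*x) by ring]
    calc ∫⁻ s in Ioi (0:ℝ), Φ s * (ENNReal.ofReal (s*x)⁻¹ * ∫⁻ u in Icc (s*x) (4*(s*x)), F u)
        = ∫⁻ s in Ioi (0:ℝ), ∫⁻ v in Icc (1:ℝ) 4, Φ s * F (s * (v * x)) := by
          refine (setLIntegral_congr_fun measurableSet_Ioi ?_).symm
          intro s hs; exact step3 s hs
      _ = ∫⁻ v in Icc (1:ℝ) 4, H (v * x) := step2.symm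
      _ = 3 := step1
  -- a dyadic block with positive mass
  obtain ⟨k, hk⟩ : ∃ k : ℤ, 0 < ∫⁻ s in Ico ((2:ℝ)^k) ((2:ℝ)^(k+1)), Φ s := by
    by_contra hcon
    push_neg at hcon
    have hcover : Ioi (0:ℝ) ⊆ ⋃ k : ℤ, Ico ((2:ℝ)^k) ((2:ℝ)^(k+1)) := by
      intro u hu
      obtain ⟨j, hj⟩ := exists_mem_Ico_zpow (mem_Ioi.mp hu) one_lt_two
      exact mem_iUnion.2 ⟨j, hj⟩
    have hzero : ∀ j : ℤ, ∫⁻ s in Ico ((2:ℝ)^j) ((2:ℝ)^(j+1)), Φ s = 0 :=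
      fun j => le_antisymm (hcon j) (zero_le)
    have : (1:ℝ≥0∞) ≤ 0 := by
      calc (1:ℝ≥0∞) = ∫⁻ s in Ioi (0:ℝ), Φ s := hΦ1.symm
        _ ≤ ∫⁻ s in ⋃ j : ℤ, Ico ((2:ℝ)^j) ((2:ℝ)^(j+1)), Φ s := lintegral_mono_set hcover
        _ ≤ ∑' j : ℤ, ∫⁻ s in Ico ((2:ℝ)^j) ((2:ℝ)^(j+1)), Φ s := lintegral_iUnion_le _ _
        _ = 0 := by simp [hzero]
    simp at this
  have h2k : ∀ j : ℤ, (0:ℝ) < (2:ℝ)^j := fun j => zpow_pos two_pos j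
  have hblocksub : Ico ((2:ℝ)^k) ((2:ℝ)^(k+1)) ⊆ Ioi (0:ℝ) :=
    fun s hs => lt_of_lt_of_le (h2k k) hs.1
  set m : ℝ≥0∞ := ∫⁻ s in Ico ((2:ℝ)^k) ((2:ℝ)^(k+1)), Φ s with hmdef
  have hm1 : m ≤ 1 := by rw [← hΦ1]; exact lintegral_mono_set hblocksub
  have hmtop : m ≠ ⊤ := (lt_of_le_of_lt hm1 ENNReal.one_lt_top).ne
  set mr : ℝ := m.toReal with hmrdef
  have hmr0 : 0 < mr := ENNReal.toReal_pos hk.ne' hmtop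
  have hmm : m = ENNReal.ofReal mr := (ENNReal.ofReal_toReal hmtop).symm
  set W : ℝ := 3 / mr with hWdef
  have hW0 : 0 < W := by positivity
  -- the sliding window bound
  have hwin : ∀ y : ℝ, 0 < y → ∫⁻ u in Icc y (2*y), F u ≤ ENNReal.ofReal (W * y) := by
    intro y hy
    set x := y / (2:ℝ)^(k+1) with hxdef
    have hxpos : 0 < x := div_pos hy (h2k _)
    have hyx : (2:ℝ)^(k+1) * x = y := by
      rw [hxdef]; field_simp
    set K0 : ℝ≥0∞ := ∫⁻ u in Icc y (2*y), F u with hK0def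
    have hlow : ∀ s ∈ Ico ((2:ℝ)^k) ((2:ℝ)^(k+1)),
        (ENNReal.ofReal y⁻¹ * K0) * Φ s ≤ Φ s *
        (ENNReal.ofReal (s*x)⁻¹ * ∫⁻ u in Icc (s*x) (4*(s*x)), F u) := by
      intro s hs
      have hs0 : 0 < s := lt_of_lt_of_le (h2k k) hs.1
      have hsxy : s * x ≤ y := by
        rw [← hyx]; exact mul_le_mul_of_nonneg_right hs.2.le hxpos.le
      have h2y : 2 * y ≤ 4*(s*x) := by
        rw [← hyx]
        have : (2:ℝ)^(k+1) = 2 * (2:ℝ)^k := by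
          rw [zpow_add_one₀ (two_ne_zero)]; ring
        rw [this]
        nlinarith [hs.1, hxpos.le, h2k k]
      have h1 : ENNReal.ofReal y⁻¹ ≤ ENNReal.ofReal (s*x)⁻¹ := by
        apply ENNReal.ofReal_le_ofReal
        exact inv_anti₀ (mul_pos hs0 hxpos) hsxy
      have h2 : K0 ≤ ∫⁻ u in Icc (s*x) (4*(s*x)), F u := by
        apply lintegral_mono_set
        exact Icc_subset_Icc hsxy h2y
      calc (ENNReal.ofReal y⁻¹ * K0) * Φ s
          ≤ (ENNReal.ofReal (s*x)⁻¹ * (∫⁻ u in Icc (s*x) (4*(s*x)), F u)) * Φ s :=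
            mul_le_mul_left (mul_le_mul' h1 h2) _
        _ = Φ s * (ENNReal.ofReal (s*x)⁻¹ * ∫⁻ u in Icc (s*x) (4*(s*x)), F u) := mul_comm _ _
    have hintlow : (ENNReal.ofReal y⁻¹ * K0) * m ≤ 3 := by
      calc (ENNReal.ofReal y⁻¹ * K0) * m
          = ∫⁻ s in Ico ((2:ℝ)^k) ((2:ℝ)^(k+1)), (ENNReal.ofReal y⁻¹ * K0) * Φ s := by
            rw [lintegral_const_mul'' _ hΦm.aemeasurable]
        _ ≤ ∫⁻ s in Ico ((2:ℝ)^k) ((2:ℝ)^(k+1)), Φ s *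
            (ENNReal.ofReal (s*x)⁻¹ * ∫⁻ u in Icc (s*x) (4*(s*x)), F u) :=
            setLIntegral_mono' measurableSet_Ico hlow
        _ ≤ ∫⁻ s in Ioi (0:ℝ), Φ s *
            (ENNReal.ofReal (s*x)⁻¹ * ∫⁻ u in Icc (s*x) (4*(s*x)), F u) :=
            lintegral_mono_set hblocksub
        _ = 3 := hstar x hxpos
    -- solve for K0
    have hb0 : ENNReal.ofReal y⁻¹ * m ≠ 0 := by
      apply mul_ne_zero
      · simpa using ENNReal.ofReal_pos.2 (inv_pos.2 hy) |>.ne'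
      · exact hk.ne'
    have hbt : ENNReal.ofReal y⁻¹ * m ≠ ⊤ :=
      ENNReal.mul_ne_top ENNReal.ofReal_ne_top hmtop
    have hK0le : K0 ≤ 3 / (ENNReal.ofReal y⁻¹ * m) := by
      rw [ENNReal.le_div_iff_mul_le (Or.inl hb0) (Or.inl hbt)]
      calc K0 * (ENNReal.ofReal y⁻¹ * m) = (ENNReal.ofReal y⁻¹ * K0) * m := by ring
        _ ≤ 3 := hintlow
    calc K0 ≤ 3 / (ENNReal.ofReal y⁻¹ * m) := hK0le
      _ = ENNReal.ofReal (W * y) := by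
          rw [hmm, ← ENNReal.ofReal_mul (inv_nonneg.2 hy.le)]
          rw [show (3:ℝ≥0∞) = ENNReal.ofReal ((3:ℕ):ℝ) by simp]
          rw [← ENNReal.ofReal_div_of_pos (by positivity)]
          congr 1
          rw [hWdef]
          push_cast
          field_simp
  -- finite measure with density Φ, for tail estimates
  set μΦ : Measure ℝ := (volume.restrict (Ioi (0:ℝ))).withDensity Φ with hμdef
  have hμap : ∀ S : Set ℝ, MeasurableSet S → S ⊆ Ioi (0:ℝ) → μΦ S = ∫⁻ s in S, Φ s := by
    intro S hS hsub
    rw [hμdef, withDensity_apply _ hS, Measure.restrict_restrict hS,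
      inter_eq_self_of_subset_left hsub]
  have hμuniv : μΦ univ = 1 := by
    rw [hμdef, withDensity_apply _ MeasurableSet.univ, Measure.restrict_univ]
    exact hΦ1
  have hμle1 : ∀ S : Set ℝ, μΦ S ≤ 1 := fun S => hμuniv ▸ measure_mono (subset_univ S)
  have hsmall : ∀ ε : ℝ≥0∞, 0 < ε → ∃ a : ℝ, 0 < a ∧ ∫⁻ s in Ioc (0:ℝ) a, Φ s ≤ ε := by
    intro ε hε
    have hanti : Antitone (fun n : ℕ => Ioc (0:ℝ) (1/(n+1))) := by
      intro i j hij
      apply Ioc_subset_Ioc_right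
      apply one_div_le_one_div_of_le (by positivity)
      exact_mod_cast add_le_add_left (Nat.cast_le.2 hij) 1
    have hseq := tendsto_measure_iInter_atTop (μ := μΦ)
      (fun n => measurableSet_Ioc.nullMeasurableSet) hanti
      ⟨0, (lt_of_le_of_lt (hμle1 _) ENNReal.one_lt_top).ne⟩
    have hempty : (⋂ n : ℕ, Ioc (0:ℝ) (1/(n+1))) = ∅ := by
      ext u
      simp only [mem_iInter, mem_Ioc, mem_empty_iff_false, iff_false]
      intro h
      obtain ⟨n, hn⟩ := exists_nat_one_div_lt (h 0).1
      exact absurd ((h n).2) (not_le.2 hn)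
    rw [hempty, measure_empty] at hseq
    obtain ⟨n, hn⟩ := (hseq.eventually_lt_const hε).exists
    refine ⟨1/(n+1), by positivity, ?_⟩
    rw [← hμap _ measurableSet_Ioc (fun u hu => hu.1)]
    exact hn.le
  have hbig : ∀ ε : ℝ≥0∞, 0 < ε → ∃ b : ℝ, ∫⁻ s in Ioi b, Φ s ≤ ε := by
    intro ε hε
    have hanti : Antitone (fun n : ℕ => Ioi ((n:ℝ))) := by
      intro i j hij
      exact Ioi_subset_Ioi (Nat.cast_le.2 hij)
    have hseq := tendsto_measure_iInter_atTop (μ := μΦ)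
      (fun n => measurableSet_Ioi.nullMeasurableSet) hanti
      ⟨0, (lt_of_le_of_lt (hμle1 _) ENNReal.one_lt_top).ne⟩
    have hempty : (⋂ n : ℕ, Ioi ((n:ℝ))) = ∅ := by
      ext u
      simp only [mem_iInter, mem_Ioi, mem_empty_iff_false, iff_false]
      intro h
      obtain ⟨n, hn⟩ := exists_nat_gt u
      exact absurd (h n) (not_lt.2 hn.le)
    rw [hempty, measure_empty] at hseq
    obtain ⟨n, hn⟩ := (hseq.eventually_lt_const hε).exists
    refine ⟨(n:ℝ), ?_⟩
    rw [← hμap _ measurableSet_Ioi (fun u hu => mem_Ioi.2 (lt_of_le_of_lt (Nat.cast_nonneg n) hu))]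
    exact hn.le
  -- choose tails
  set ε : ℝ≥0∞ := ENNReal.ofReal ((12 * W)⁻¹) with hεdef
  have hεpos : 0 < ε := ENNReal.ofReal_pos.2 (by positivity)
  obtain ⟨aa, haa0, haa⟩ := hsmall ε hεpos
  obtain ⟨bb, hbb⟩ := hbig ε hεpos
  set b' : ℝ := max bb aa with hb'def
  have hab' : aa ≤ b' := le_max_right _ _
  have hb'0 : 0 < b' := lt_of_lt_of_le haa0 hab'
  have hIoib' : ∫⁻ s in Ioi b', Φ s ≤ ε :=
    le_trans (lintegral_mono_set (Ioi_subset_Ioi (le_max_left _ _))) hbb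
  -- choose x
  set c1 : ℝ := aa⁻¹ * (4 * b') ^ ((1:ℝ)/2) with hc1def
  have hc10 : 0 < c1 := by positivity
  set x : ℝ := max 1 (c1^2) with hxdef
  have hx0 : 0 < x := lt_of_lt_of_le one_pos (le_max_left _ _)
  -- uniform pointwise tail bound
  have htailpt : ∀ s : ℝ, 0 < s →
      ENNReal.ofReal (s*x)⁻¹ * (∫⁻ u in Icc (s*x) (4*(s*x)), F u) ≤ ENNReal.ofReal (3*W) := by
    intro s hs
    have hsx : 0 < s * x := mul_pos hs hx0
    have hsplit : (∫⁻ u in Icc (s*x) (4*(s*x)), F u)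
        ≤ ENNReal.ofReal (W * (s*x)) + ENNReal.ofReal (W * (2*(s*x))) := by
      calc (∫⁻ u in Icc (s*x) (4*(s*x)), F u)
          ≤ ∫⁻ u in Icc (s*x) (2*(s*x)) ∪ Icc (2*(s*x)) (4*(s*x)), F u := by
            apply lintegral_mono_set
            intro u hu
            rcases le_or_gt u (2*(s*x)) with h | h
            · exact Or.inl ⟨hu.1, h⟩
            · exact Or.inr ⟨h.le, hu.2⟩
        _ ≤ (∫⁻ u in Icc (s*x) (2*(s*x)), F u) + ∫⁻ u in Icc (2*(s*x)) (4*(s*x)), F u :=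
            lintegral_union_le _ _ _
        _ ≤ ENNReal.ofReal (W * (s*x)) + ENNReal.ofReal (W * (2*(s*x))) := by
            refine add_le_add (hwin _ hsx) ?_
            have := hwin (2*(s*x)) (by positivity)
            rw [show 2*(2*(s*x)) = 4*(s*x) by ring] at this
            exact this
    calc ENNReal.ofReal (s*x)⁻¹ * (∫⁻ u in Icc (s*x) (4*(s*x)), F u)
        ≤ ENNReal.ofReal (s*x)⁻¹ * (ENNReal.ofReal (W * (s*x)) + ENNReal.ofReal (W * (2*(s*x)))) :=
          mul_le_mul_right hsplit _
      _ = ENNReal.ofReal ((s*x)⁻¹ * (W * (s*x) + W * (2*(s*x)))) := by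
          rw [← ENNReal.ofReal_add (by positivity) (by positivity),
            ← ENNReal.ofReal_mul (by positivity)]
      _ = ENNReal.ofReal (3*W) := by
          congr 1
          field_simp
          ring
  have h3x := hstar x hx0
  -- the three pieces
  have hT1 : ∫⁻ s in Ioc (0:ℝ) aa, Φ s *
      (ENNReal.ofReal (s*x)⁻¹ * ∫⁻ u in Icc (s*x) (4*(s*x)), F u) ≤ ENNReal.ofReal (1/4) := by
    calc ∫⁻ s in Ioc (0:ℝ) aa, Φ s *
        (ENNReal.ofReal (s*x)⁻¹ * ∫⁻ u in Icc (s*x) (4*(s*x)), F u)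
        ≤ ∫⁻ s in Ioc (0:ℝ) aa, ENNReal.ofReal (3*W) * Φ s := by
          refine setLIntegral_mono' measurableSet_Ioc (fun s hs => ?_)
          rw [mul_comm (ENNReal.ofReal (3*W)) (Φ s)]
          exact mul_le_mul_right (htailpt s hs.1) _
      _ = ENNReal.ofReal (3*W) * ∫⁻ s in Ioc (0:ℝ) aa, Φ s :=
          lintegral_const_mul'' _ hΦm.aemeasurable
      _ ≤ ENNReal.ofReal (3*W) * ε := mul_le_mul_right haa _
      _ = ENNReal.ofReal (1/4) := by
          rw [hεdef, ← ENNReal.ofReal_mul (by positivity)]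
          congr 1
          field_simp
          ring
  have hT3 : ∫⁻ s in Ioi b', Φ s *
      (ENNReal.ofReal (s*x)⁻¹ * ∫⁻ u in Icc (s*x) (4*(s*x)), F u) ≤ ENNReal.ofReal (1/4) := by
    calc ∫⁻ s in Ioi b', Φ s *
        (ENNReal.ofReal (s*x)⁻¹ * ∫⁻ u in Icc (s*x) (4*(s*x)), F u)
        ≤ ∫⁻ s in Ioi b', ENNReal.ofReal (3*W) * Φ s := by
          refine setLIntegral_mono' measurableSet_Ioi (fun s hs => ?_)
          rw [mul_comm (ENNReal.ofReal (3*W)) (Φ s)]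
          exact mul_le_mul_right (htailpt s (lt_trans hb'0 hs)) _
      _ = ENNReal.ofReal (3*W) * ∫⁻ s in Ioi b', Φ s :=
          lintegral_const_mul'' _ hΦm.aemeasurable
      _ ≤ ENNReal.ofReal (3*W) * ε := mul_le_mul_right hIoib' _
      _ = ENNReal.ofReal (1/4) := by
          rw [hεdef, ← ENNReal.ofReal_mul (by positivity)]
          congr 1
          field_simp
          ring
  -- the middle piece
  set C : ℝ≥0∞ := ENNReal.ofReal ((aa*x)⁻¹ * (4*(b'*x)) ^ ((1:ℝ)/2)) with hCdef
  have hT2 : ∫⁻ s in Icc aa b', Φ s *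
      (ENNReal.ofReal (s*x)⁻¹ * ∫⁻ u in Icc (s*x) (4*(s*x)), F u) ≤ C := by
    have hmidpt : ∀ s ∈ Icc aa b',
        ENNReal.ofReal (s*x)⁻¹ * (∫⁻ u in Icc (s*x) (4*(s*x)), F u) ≤ C := by
      intro s hs
      have hs0 : 0 < s := lt_of_lt_of_le haa0 hs.1
      have h1 : ENNReal.ofReal (s*x)⁻¹ ≤ ENNReal.ofReal (aa*x)⁻¹ := by
        apply ENNReal.ofReal_le_ofReal
        apply inv_anti₀ (by positivity)
        exact mul_le_mul_of_nonneg_right hs.1 hx0.le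
      have h2 : (∫⁻ u in Icc (s*x) (4*(s*x)), F u)
          ≤ ENNReal.ofReal ((4*(b'*x)) ^ ((1:ℝ)/2)) := by
        calc (∫⁻ u in Icc (s*x) (4*(s*x)), F u)
            ≤ ∫⁻ u in Icc (aa*x) (4*(b'*x)), F u := by
              apply lintegral_mono_set
              apply Icc_subset_Icc
              · exact mul_le_mul_of_nonneg_right hs.1 hx0.le
              · have : s * x ≤ b' * x := mul_le_mul_of_nonneg_right hs.2 hx0.le
                nlinarith
          _ ≤ (∫⁻ u in Icc (aa*x) (4*(b'*x)), (F u)^2) ^ ((1:ℝ)/2)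
              * (volume (Icc (aa*x) (4*(b'*x)))) ^ ((1:ℝ)/2) := lint_CS hFm _
          _ ≤ (1:ℝ≥0∞) ^ ((1:ℝ)/2) * (ENNReal.ofReal (4*(b'*x))) ^ ((1:ℝ)/2) := by
              apply mul_le_mul'
              · apply ENNReal.rpow_le_rpow _ (by norm_num)
                rw [← hF2]
                apply lintegral_mono_set
                intro u hu
                exact lt_of_lt_of_le (by positivity) hu.1
              · apply ENNReal.rpow_le_rpow _ (by norm_num)
                rw [Real.volume_Icc]
                apply ENNReal.ofReal_le_ofReal
                nlinarith [mul_pos haa0 hx0]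
          _ = ENNReal.ofReal ((4*(b'*x)) ^ ((1:ℝ)/2)) := by
              rw [ENNReal.one_rpow, one_mul, ENNReal.ofReal_rpow_of_pos (by positivity)]
      calc ENNReal.ofReal (s*x)⁻¹ * (∫⁻ u in Icc (s*x) (4*(s*x)), F u)
          ≤ ENNReal.ofReal (aa*x)⁻¹ * ENNReal.ofReal ((4*(b'*x)) ^ ((1:ℝ)/2)) :=
            mul_le_mul' h1 h2
        _ = C := by rw [hCdef, ENNReal.ofReal_mul (by positivity)]
    calc ∫⁻ s in Icc aa b', Φ s *
        (ENNReal.ofReal (s*x)⁻¹ * ∫⁻ u in Icc (s*x) (4*(s*x)), F u)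
        ≤ ∫⁻ s in Icc aa b', C * Φ s := by
          refine setLIntegral_mono' measurableSet_Icc (fun s hs => ?_)
          rw [mul_comm C (Φ s)]
          exact mul_le_mul_right (hmidpt s hs) _
      _ = C * ∫⁻ s in Icc aa b', Φ s := lintegral_const_mul'' _ hΦm.aemeasurable
      _ ≤ C * 1 := by
          apply mul_le_mul_right
          rw [← hΦ1]
          exact lintegral_mono_set (fun s hs => lt_of_lt_of_le haa0 hs.1)
      _ = C := mul_one _
  have hCle1 : C ≤ 1 := by
    rw [hCdef, show (1:ℝ≥0∞) = ENNReal.ofReal 1 by simp]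
    apply ENNReal.ofReal_le_ofReal
    have hrw : (4*(b'*x)) ^ ((1:ℝ)/2) = (4*b') ^ ((1:ℝ)/2) * x ^ ((1:ℝ)/2) := by
      rw [show 4*(b'*x) = (4*b') * x by ring, Real.mul_rpow (by positivity) hx0.le]
    have hxx : x⁻¹ * x ^ ((1:ℝ)/2) = x ^ (-(1:ℝ)/2) := by
      rw [← Real.rpow_neg_one x, ← Real.rpow_add hx0]
      norm_num
    have hexpand : (aa*x)⁻¹ * (4*(b'*x)) ^ ((1:ℝ)/2) = c1 * (x⁻¹ * x ^ ((1:ℝ)/2)) := by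
      rw [hrw, mul_inv, hc1def]; ring
    rw [hexpand, hxx]
    rcases le_or_gt c1 1 with hc | hc
    · have hx1 : x ^ (-(1:ℝ)/2) ≤ 1 := by
        apply Real.rpow_le_one_of_one_le_of_nonpos (le_max_left 1 _) (by norm_num)
      nlinarith [Real.rpow_nonneg hx0.le (-(1:ℝ)/2)]
    · have hx2 : x = c1^2 := max_eq_right (by nlinarith)
      have hxval : x ^ (-(1:ℝ)/2) = c1⁻¹ := by
        rw [hx2, ← Real.rpow_natCast c1 2, ← Real.rpow_mul hc10.le]
        norm_num
        exact Real.rpow_neg_one c1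
      rw [hxval, mul_inv_cancel₀ hc10.ne']
  -- the contradiction
  have hcover : Ioi (0:ℝ) ⊆ Ioc 0 aa ∪ (Icc aa b' ∪ Ioi b') := by
    intro s hs
    rcases le_or_gt s aa with h | h
    · exact Or.inl ⟨hs, h⟩
    · rcases le_or_gt s b' with h2 | h2
      · exact Or.inr (Or.inl ⟨h.le, h2⟩)
      · exact Or.inr (Or.inr h2)
  have hchain : (3:ℝ≥0∞) ≤ ENNReal.ofReal (1/4) + (1 + ENNReal.ofReal (1/4)) := by
    calc (3:ℝ≥0∞) = ∫⁻ s in Ioi (0:ℝ), Φ s *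
        (ENNReal.ofReal (s*x)⁻¹ * ∫⁻ u in Icc (s*x) (4*(s*x)), F u) := h3x.symm
      _ ≤ ∫⁻ s in Ioc 0 aa ∪ (Icc aa b' ∪ Ioi b'), Φ s *
          (ENNReal.ofReal (s*x)⁻¹ * ∫⁻ u in Icc (s*x) (4*(s*x)), F u) :=
          lintegral_mono_set hcover
      _ ≤ (∫⁻ s in Ioc (0:ℝ) aa, Φ s *
          (ENNReal.ofReal (s*x)⁻¹ * ∫⁻ u in Icc (s*x) (4*(s*x)), F u))
          + ∫⁻ s in Icc aa b' ∪ Ioi b', Φ s *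
          (ENNReal.ofReal (s*x)⁻¹ * ∫⁻ u in Icc (s*x) (4*(s*x)), F u) :=
          lintegral_union_le _ _ _
      _ ≤ ENNReal.ofReal (1/4) + ((∫⁻ s in Icc aa b', Φ s *
          (ENNReal.ofReal (s*x)⁻¹ * ∫⁻ u in Icc (s*x) (4*(s*x)), F u))
          + ∫⁻ s in Ioi b', Φ s *
          (ENNReal.ofReal (s*x)⁻¹ * ∫⁻ u in Icc (s*x) (4*(s*x)), F u)) :=
          add_le_add hT1 (lintegral_union_le _ _ _)
      _ ≤ ENNReal.ofReal (1/4) + (1 + ENNReal.ofReal (1/4)) :=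
          add_le_add_right (add_le_add (le_trans hT2 hCle1) hT3) _
  have hlt : ENNReal.ofReal (1/4) + (1 + ENNReal.ofReal (1/4)) < 3 := by
    rw [show (1:ℝ≥0∞) = ENNReal.ofReal 1 by simp,
      ← ENNReal.ofReal_add (by norm_num) (by norm_num),
      ← ENNReal.ofReal_add (by norm_num) (by norm_num),
      show (3:ℝ≥0∞) = ENNReal.ofReal 3 by simp]
    exact (ENNReal.ofReal_lt_ofReal_iff (by norm_num)).2 (by norm_num)
  exact absurd (lt_of_le_of_lt hchain hlt) (lt_irrefl _)


theorem stmt_14 :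
    (1/3 : ℝ≥0∞) ≤ sInf {x : ℝ≥0∞ | ∃ f φ : ℝ → ℝ, Measurable f ∧ Measurable φ ∧
      (∀ t ∈ Ioi (0:ℝ), 0 ≤ f t) ∧ (∀ s ∈ Ioi (0:ℝ), 0 ≤ φ s) ∧
      (∫ t in Ioi (0:ℝ), (f t)^2) = 1 ∧ (∫ s in Ioi (0:ℝ), φ s) = 1 ∧
      x = (∫⁻ s in Ioi (0:ℝ), ENNReal.ofReal ((φ s)^2)) ^ (1/2 : ℝ) *
          ((1/2 : ℝ≥0∞) * ∫⁻ t in Ioi (0:ℝ), ENNReal.ofReal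
            ((1 - ∫ s in Ioi (0:ℝ), φ s * f (s * t))^2 * t ^ (-(3/2) : ℝ)))} := by
  refine le_sInf fun x hx => ?_
  obtain ⟨f, φ, hf, hφ, hf0, hφ0, hf2, hφ1, hxeq⟩ := hx
  set g : ℝ → ℝ := fun t => ∫ s in Ioi (0:ℝ), φ s * f (s * t) with hgdef
  set A : ℝ≥0∞ := ∫⁻ s in Ioi (0:ℝ), ENNReal.ofReal ((φ s)^2) with hAdef
  set B : ℝ≥0∞ := ∫⁻ t in Ioi (0:ℝ), ENNReal.ofReal ((1 - g t)^2 * t ^ (-(3/2) : ℝ)) with hBdef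
  have hxeq' : x = A ^ (1/2 : ℝ) * ((1/2 : ℝ≥0∞) * B) := hxeq
  -- basic integrability facts
  have hf2int : IntegrableOn (fun t => (f t)^2) (Ioi (0:ℝ)) := by
    by_contra hcon
    rw [integral_undef hcon] at hf2
    norm_num at hf2
  have hφint : IntegrableOn φ (Ioi (0:ℝ)) := by
    by_contra hcon
    rw [integral_undef hcon] at hφ1
    norm_num at hφ1
  have hF2 : ∫⁻ u in Ioi (0:ℝ), (ENNReal.ofReal (f u))^2 = 1 := by
    have h1 : ∫⁻ u in Ioi (0:ℝ), (ENNReal.ofReal (f u))^2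
        = ∫⁻ u in Ioi (0:ℝ), ENNReal.ofReal ((f u)^2) := by
      refine setLIntegral_congr_fun measurableSet_Ioi (fun u hu => ?_)
      rw [← ENNReal.ofReal_pow (hf0 u hu)]
    rw [h1, ← ofReal_integral_eq_lintegral_ofReal hf2int
      ((ae_restrict_iff' measurableSet_Ioi).2 (ae_of_all _ fun u _ => sq_nonneg _)), hf2]
    simp
  have hΦl1 : ∫⁻ s in Ioi (0:ℝ), ENNReal.ofReal (φ s) = 1 := by
    rw [← ofReal_integral_eq_lintegral_ofReal hφint
      ((ae_restrict_iff' measurableSet_Ioi).2 (ae_of_all _ hφ0)), hφ1]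
    simp
  -- Cauchy-Schwarz bound, fully in ℝ≥0∞
  have hCS : ∀ t : ℝ, 0 < t →
      ENNReal.ofReal (g t) ≤ A ^ (1/2 : ℝ) * ENNReal.ofReal (t ^ (-(1:ℝ)/2)) := by
    intro t ht
    have hconj : Real.HolderConjugate 2 2 := Real.HolderConjugate.two_two
    have hHold := ENNReal.lintegral_mul_le_Lp_mul_Lq (volume.restrict (Ioi (0:ℝ))) hconj
      (hφ.ennreal_ofReal).aemeasurable
      ((hf.comp (measurable_id.mul_const t)).ennreal_ofReal).aemeasurable
    have hL1 : (∫⁻ s in Ioi (0:ℝ), (fun s => ENNReal.ofReal (φ s)) s ^ (2:ℝ)) = A := by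
      rw [hAdef]
      refine setLIntegral_congr_fun measurableSet_Ioi (fun s hs => ?_)
      rw [show (2:ℝ) = ((2:ℕ):ℝ) by norm_num, ENNReal.rpow_natCast,
        ← ENNReal.ofReal_pow (hφ0 s hs)]
    have hL2 : (∫⁻ s in Ioi (0:ℝ), (fun s => ENNReal.ofReal (f (s * t))) s ^ (2:ℝ))
        = ENNReal.ofReal t⁻¹ := by
      have heq : ∀ s : ℝ, (ENNReal.ofReal (f (s * t))) ^ (2:ℝ)
          = (fun u => (ENNReal.ofReal (f u))^2) (t * s) := by
        intro s
        simp only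
        rw [show (2:ℝ) = ((2:ℕ):ℝ) by norm_num, ENNReal.rpow_natCast, mul_comm t s]
      calc (∫⁻ s in Ioi (0:ℝ), (fun s => ENNReal.ofReal (f (s * t))) s ^ (2:ℝ))
          = ∫⁻ s in Ioi (0:ℝ), (fun u => (ENNReal.ofReal (f u))^2) (t * s) := by
            refine setLIntegral_congr_fun measurableSet_Ioi (fun s _ => heq s)
        _ = ENNReal.ofReal t⁻¹ * ∫⁻ u in Ioi (0:ℝ), (ENNReal.ofReal (f u))^2 :=
            lint_scale_Ioi ht (hf.ennreal_ofReal.pow_const 2)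
        _ = ENNReal.ofReal t⁻¹ := by rw [hF2, mul_one]
    have hmain : (∫⁻ s in Ioi (0:ℝ), ENNReal.ofReal (φ s) * ENNReal.ofReal (f (s * t)))
        ≤ A ^ (1/2 : ℝ) * ENNReal.ofReal (t ^ (-(1:ℝ)/2)) := by
      calc (∫⁻ s in Ioi (0:ℝ), ENNReal.ofReal (φ s) * ENNReal.ofReal (f (s * t)))
          ≤ (∫⁻ s in Ioi (0:ℝ), (fun s => ENNReal.ofReal (φ s)) s ^ (2:ℝ)) ^ ((1:ℝ)/2)
            * (∫⁻ s in Ioi (0:ℝ), (fun s => ENNReal.ofReal (f (s * t))) s ^ (2:ℝ)) ^ ((1:ℝ)/2) :=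
            hHold
        _ = A ^ (1/2 : ℝ) * (ENNReal.ofReal t⁻¹) ^ ((1:ℝ)/2) := by rw [hL1, hL2]
        _ = A ^ (1/2 : ℝ) * ENNReal.ofReal (t ^ (-(1:ℝ)/2)) := by
            congr 1
            rw [ENNReal.ofReal_rpow_of_pos (inv_pos.2 ht)]
            congr 1
            rw [← Real.rpow_neg_one t, ← Real.rpow_mul ht.le]
            norm_num
    -- pass from the Bochner integral to the lintegral
    by_cases hint : IntegrableOn (fun s => φ s * f (s * t)) (Ioi (0:ℝ))
    · have hnn : 0 ≤ᵐ[volume.restrict (Ioi (0:ℝ))] fun s => φ s * f (s * t) :=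
        (ae_restrict_iff' measurableSet_Ioi).2 (ae_of_all _ fun s hs =>
          mul_nonneg (hφ0 s hs) (hf0 _ (mem_Ioi.2 (mul_pos hs ht))))
      have heq := ofReal_integral_eq_lintegral_ofReal hint hnn
      have heq2 : (∫⁻ s in Ioi (0:ℝ), ENNReal.ofReal (φ s * f (s * t)))
          = ∫⁻ s in Ioi (0:ℝ), ENNReal.ofReal (φ s) * ENNReal.ofReal (f (s * t)) :=
        setLIntegral_congr_fun measurableSet_Ioi
          (fun s hs => ENNReal.ofReal_mul (hφ0 s hs))
      calc ENNReal.ofReal (g t)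
          = ∫⁻ s in Ioi (0:ℝ), ENNReal.ofReal (φ s) * ENNReal.ofReal (f (s * t)) := by
            rw [hgdef]; rw [heq, heq2]
        _ ≤ _ := hmain
    · rw [hgdef]
      simp only
      rw [integral_undef hint]
      simp
  -- case split on A
  rcases eq_or_ne A 0 with hA0 | hA0
  · exfalso
    have hA0' : (∫⁻ s in Ioi (0:ℝ), ENNReal.ofReal ((φ s)^2)) = 0 := by rw [← hAdef]; exact hA0
    have h0 : ∀ᵐ s ∂(volume.restrict (Ioi (0:ℝ))), ENNReal.ofReal ((φ s)^2) = 0 :=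
      (lintegral_eq_zero_iff' ((hφ.pow_const 2).ennreal_ofReal).aemeasurable).mp hA0'
    have h1 : ∀ᵐ s ∂(volume.restrict (Ioi (0:ℝ))), φ s = 0 := by
      filter_upwards [h0] with s h
      rw [ENNReal.ofReal_eq_zero] at h
      have : (φ s)^2 = 0 := le_antisymm h (sq_nonneg _)
      exact (pow_eq_zero_iff two_ne_zero).mp this
    rw [integral_congr_ae h1] at hφ1
    simp at hφ1
  rcases eq_or_ne A ⊤ with hAtop | hAtop
  · -- infinite first factor: show B ≠ 0, so the product is ⊤
    have hmeasg : Measurable g := by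
      have hSM : StronglyMeasurable fun p : ℝ × ℝ => φ p.2 * f (p.2 * p.1) :=
        ((hφ.comp measurable_snd).mul
          (hf.comp (measurable_snd.mul measurable_fst))).stronglyMeasurable
      exact hSM.integral_prod_right'.measurable
    have hBne : B ≠ 0 := by
      intro hB0
      have hmeasB : AEMeasurable (fun t : ℝ => ENNReal.ofReal ((1 - g t)^2 * t ^ (-(3/2) : ℝ)))
          (volume.restrict (Ioi (0:ℝ))) := by
        apply Measurable.aemeasurable
        apply Measurable.ennreal_ofReal
        exact (((measurable_const.sub hmeasg).pow_const 2).mul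
          (measurable_id.pow measurable_const))
      have hae0 : ∀ᵐ t ∂(volume.restrict (Ioi (0:ℝ))),
          ENNReal.ofReal ((1 - g t)^2 * t ^ (-(3/2) : ℝ)) = 0 :=
        (lintegral_eq_zero_iff' hmeasB).mp (by rw [← hBdef]; exact hB0)
      have hg1 : ∀ᵐ t ∂(volume.restrict (Ioi (0:ℝ))), g t = 1 := by
        filter_upwards [hae0, ae_restrict_mem measurableSet_Ioi] with t h ht
        rw [ENNReal.ofReal_eq_zero] at h
        have htp : 0 < t ^ (-(3/2) : ℝ) := Real.rpow_pos_of_pos ht _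
        have h2 : (1 - g t)^2 = 0 := by nlinarith [sq_nonneg (1 - g t)]
        have h3 := (pow_eq_zero_iff two_ne_zero).mp h2
        linarith [h3]
      have hgl : ∀ᵐ t ∂(volume.restrict (Ioi (0:ℝ))),
          (∫⁻ s in Ioi (0:ℝ), ENNReal.ofReal (φ s) * ENNReal.ofReal (f (s * t))) = 1 := by
        filter_upwards [hg1, ae_restrict_mem measurableSet_Ioi] with t hgt ht
        have hint : IntegrableOn (fun s => φ s * f (s * t)) (Ioi (0:ℝ)) := by
          by_contra hcon
          rw [hgdef] at hgt
          simp only at hgt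
          rw [integral_undef hcon] at hgt
          norm_num at hgt
        have hnn : 0 ≤ᵐ[volume.restrict (Ioi (0:ℝ))] fun s => φ s * f (s * t) :=
          (ae_restrict_iff' measurableSet_Ioi).2 (ae_of_all _ fun s hs =>
            mul_nonneg (hφ0 s hs) (hf0 _ (mem_Ioi.2 (mul_pos hs ht))))
        have heq := ofReal_integral_eq_lintegral_ofReal hint hnn
        have heq2 : (∫⁻ s in Ioi (0:ℝ), ENNReal.ofReal (φ s * f (s * t)))
            = ∫⁻ s in Ioi (0:ℝ), ENNReal.ofReal (φ s) * ENNReal.ofReal (f (s * t)) :=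
          setLIntegral_congr_fun measurableSet_Ioi
            (fun s hs => ENNReal.ofReal_mul (hφ0 s hs))
        rw [← heq2, ← heq, show (∫ s in Ioi (0:ℝ), φ s * f (s * t)) = g t from rfl, hgt]
        simp
      exact no_unit hf hφ hF2 hΦl1 hgl
    rw [hxeq', hAtop]
    have h2 : (1/2 : ℝ≥0∞) * B ≠ 0 := by
      simp only [ne_eq, mul_eq_zero, not_or]
      constructor
      · norm_num
      · exact hBne
    rw [ENNReal.top_rpow_of_pos (by norm_num), ENNReal.top_mul h2]
    exact le_top
  -- main case : 0 < A < ⊤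
  set a : ℝ := A.toReal with hadef
  have ha : 0 < a := ENNReal.toReal_pos hA0 hAtop
  have hAa : A = ENNReal.ofReal a := (ENNReal.ofReal_toReal hAtop).symm
  have hgle : ∀ t : ℝ, 0 < t → g t ≤ a ^ ((1:ℝ)/2) * t ^ (-(1:ℝ)/2) := by
    intro t ht
    have h := hCS t ht
    rw [hAa, ENNReal.ofReal_rpow_of_pos ha, ← ENNReal.ofReal_mul (by positivity)] at h
    exact (ENNReal.ofReal_le_ofReal_iff (by positivity)).mp h
  have hpt : ∀ t ∈ Ioi a,
      ENNReal.ofReal ((1 - a ^ ((1:ℝ)/2) * t ^ (-(1:ℝ)/2))^2 * t ^ (-(3:ℝ)/2))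
      ≤ ENNReal.ofReal ((1 - g t)^2 * t ^ (-(3/2) : ℝ)) := by
    intro t ht
    have ht0 : 0 < t := lt_trans ha ht
    have hr1 : a ^ ((1:ℝ)/2) * t ^ (-(1:ℝ)/2) ≤ 1 := by
      have h1 : a ^ ((1:ℝ)/2) ≤ t ^ ((1:ℝ)/2) :=
        Real.rpow_le_rpow ha.le (le_of_lt ht) (by norm_num)
      have h2 : t ^ (-(1:ℝ)/2) = (t ^ ((1:ℝ)/2))⁻¹ := by
        rw [neg_div, Real.rpow_neg ht0.le]
      rw [h2, ← div_eq_mul_inv]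
      exact (div_le_one (Real.rpow_pos_of_pos ht0 _)).2 h1
    have hgt : g t ≤ a ^ ((1:ℝ)/2) * t ^ (-(1:ℝ)/2) := hgle t ht0
    apply ENNReal.ofReal_le_ofReal
    have hexp : t ^ (-(3/2) : ℝ) = t ^ (-(3:ℝ)/2) := by norm_num
    rw [hexp]
    apply mul_le_mul_of_nonneg_right _ (Real.rpow_nonneg ht0.le _)
    have h0 : 0 ≤ 1 - a ^ ((1:ℝ)/2) * t ^ (-(1:ℝ)/2) := by linarith
    exact pow_le_pow_left₀ h0 (by linarith) 2
  have hBlow : ENNReal.ofReal (2/3 * a ^ (-(1:ℝ)/2)) ≤ B := by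
    calc ENNReal.ofReal (2/3 * a ^ (-(1:ℝ)/2))
        = ∫⁻ t in Ioi a, ENNReal.ofReal
            ((1 - a ^ ((1:ℝ)/2) * t ^ (-(1:ℝ)/2))^2 * t ^ (-(3:ℝ)/2)) := (keyIntegral ha).symm
      _ ≤ ∫⁻ t in Ioi a, ENNReal.ofReal ((1 - g t)^2 * t ^ (-(3/2) : ℝ)) :=
          setLIntegral_mono' measurableSet_Ioi hpt
      _ ≤ B := by rw [hBdef]; exact lintegral_mono_set (Ioi_subset_Ioi ha.le)
  rw [hxeq', hAa, ENNReal.ofReal_rpow_of_pos ha]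
  calc (1/3 : ℝ≥0∞) = ENNReal.ofReal (a ^ ((1:ℝ)/2) * (1/2 * (2/3 * a ^ (-(1:ℝ)/2)))) := by
        rw [show a ^ ((1:ℝ)/2) * (1/2 * (2/3 * a ^ (-(1:ℝ)/2)))
            = 1/3 * (a ^ ((1:ℝ)/2) * a ^ (-(1:ℝ)/2)) by ring,
          ← Real.rpow_add ha, show (1:ℝ)/2 + -(1:ℝ)/2 = 0 by norm_num, Real.rpow_zero, mul_one,
          ENNReal.ofReal_div_of_pos (by norm_num)]
        simp
    _ = ENNReal.ofReal (a ^ ((1:ℝ)/2)) * (ENNReal.ofReal (1/2)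
          * ENNReal.ofReal (2/3 * a ^ (-(1:ℝ)/2))) := by
        rw [← ENNReal.ofReal_mul (by positivity), ← ENNReal.ofReal_mul (by positivity)]
    _ = ENNReal.ofReal (a ^ ((1:ℝ)/2)) * ((1/2 : ℝ≥0∞)
          * ENNReal.ofReal (2/3 * a ^ (-(1:ℝ)/2))) := by
        congr 2
        rw [ENNReal.ofReal_div_of_pos (by norm_num)]
        simp
    _ ≤ ENNReal.ofReal (a ^ ((1:ℝ)/2)) * ((1/2 : ℝ≥0∞) * B) :=
        mul_le_mul_right (mul_le_mul_right hBlow _) _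
end
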